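/- arXiv:2112.04694 — 2 statements merged into one kernel-verified Lean document; each statement's English description precedes it below -/
import Mathlib

section
/- (Theorem 3: quantum Fisher information is the minimum variance over purifications.) Let ρ be a d×d density matrix and H_S an Hermitian d×d matrix. (a) For every positive integer m, every matrix M ∈ ℂ^{d×m} with M M† = ρ, and every Hermitian m×m matrix H_A, the unit vector Φ = Σ_{i,j} M_{ij} e_i ⊗ e_j ∈ ℂ^d ⊗ ℂ^m and the Hamiltonian H_tot = H_S ⊗ I_m + I_d ⊗ H_A satisfy 4·(⟨Φ|H_tot²|Φ⟩ − ⟨Φ|H_tot|Φ⟩²) ≥ F_{H_S}(ρ). (b) There exist a matrix M ∈ ℂ^{d×d} with M M† = ρ and an Hermitian d×d matrix H_A for which equality holds, i.e. 4·(⟨Φ|H_tot²|Φ⟩ − ⟨Φ|H_tot|Φ⟩²) = F_{H_S}(ρ). -/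
open Matrix Complex Filter Kronecker
open scoped ComplexOrder

noncomputable section

/-- n-fold Kronecker power of a matrix, indexed by functions `Fin n → Fin d`. -/
def kronPow {d : ℕ} (X : Matrix (Fin d) (Fin d) ℂ) (n : ℕ) :
    Matrix (Fin n → Fin d) (Fin n → Fin d) ℂ :=
  Matrix.of fun i j => ∏ k, X (i k) (j k)

/-- The `n`-copy (non-interacting) Hamiltonian `Σᵢ I^{⊗(i-1)} ⊗ H ⊗ I^{⊗(n-i)}`. -/
def nCopyHam {d : ℕ} (H : Matrix (Fin d) (Fin d) ℂ) (n : ℕ) :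
    Matrix (Fin n → Fin d) (Fin n → Fin d) ℂ :=
  ∑ k : Fin n, Matrix.of fun i j =>
    H (i k) (j k) * ∏ l ∈ Finset.univ.erase k, (if i l = j l then (1 : ℂ) else 0)

/-- Time evolution unitary `e^{-iHt}`. -/
def timeEvol {m : Type*} [Fintype m] [DecidableEq m] (H : Matrix m m ℂ) (t : ℝ) :
    Matrix m m ℂ :=
  NormedSpace.exp ((-(Complex.I * (t : ℂ))) • H)

/-- Trace norm `‖A‖₁ = Tr √(AᴴA)`. -/
def traceNorm {m : Type*} [Fintype m] [DecidableEq m] (A : Matrix m m ℂ) : ℝ :=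
  (((Matrix.posSemidef_conjTranspose_mul_self A).1.eigenvectorUnitary.1 *
    diagonal (((↑) : ℝ → ℂ) ∘ (√·) ∘ (Matrix.posSemidef_conjTranspose_mul_self A).1.eigenvalues) *
    (star (Matrix.posSemidef_conjTranspose_mul_self A).1.eigenvectorUnitary : Matrix m m ℂ)).trace).re

/-- A quantum channel: a map admitting a Kraus representation. -/
def IsQuantumChannel {m n : Type*} [Fintype m] [DecidableEq m] [Fintype n] [DecidableEq n]
    (E : Matrix m m ℂ → Matrix n n ℂ) : Prop :=
  ∃ (K : ℕ) (A : Fin K → Matrix n m ℂ),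
    (∀ X, E X = ∑ k, A k * X * (A k)ᴴ) ∧ (∑ k, (A k)ᴴ * A k = 1)

/-- Time-translation invariance of a map w.r.t. input/output Hamiltonians. -/
def IsTI {m n : Type*} [Fintype m] [DecidableEq m] [Fintype n] [DecidableEq n]
    (Hin : Matrix m m ℂ) (Hout : Matrix n n ℂ)
    (E : Matrix m m ℂ → Matrix n n ℂ) : Prop :=
  ∀ (t : ℝ) (X : Matrix m m ℂ),
    timeEvol Hout t * E X * timeEvol Hout (-t) =
      E (timeEvol Hin t * X * timeEvol Hin (-t))

/-- Energy variance of a (unit) vector. -/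
def varVec {m : Type*} [Fintype m] (H : Matrix m m ℂ) (ψ : m → ℂ) : ℝ :=
  (star ψ ⬝ᵥ ((H * H) *ᵥ ψ)).re - ((star ψ ⬝ᵥ (H *ᵥ ψ)).re) ^ 2

/-- The quantum Fisher information formula for a given spectral decomposition data. -/
def qfiOf {m : Type*} [Fintype m] (H : Matrix m m ℂ) (p : m → ℝ) (φ : m → m → ℂ) : ℝ :=
  2 * ∑ j, ∑ k,
    if 0 < p j + p k then
      (p j - p k) ^ 2 / (p j + p k) * Complex.normSq (star (φ j) ⬝ᵥ (H *ᵥ φ k))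
    else 0

/-- Quantum Fisher information of a Hermitian (e.g. density) matrix `ρ` w.r.t. `H`. -/
def QFI {m : Type*} [Fintype m] [DecidableEq m] {ρ : Matrix m m ℂ}
    (hρ : ρ.IsHermitian) (H : Matrix m m ℂ) : ℝ :=
  qfiOf H hρ.eigenvalues (fun j i => hρ.eigenvectorBasis j i)

open scoped Classical in
/-- Total positive-semidefinite square root (zero on non-PSD inputs). -/
def msqrt {m : Type*} [Fintype m] [DecidableEq m] (A : Matrix m m ℂ) : Matrix m m ℂ :=
  if h : A.PosSemidef then
    h.1.eigenvectorUnitary.1 * diagonal (((↑) : ℝ → ℂ) ∘ (√·) ∘ h.1.eigenvalues) *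
      (star h.1.eigenvectorUnitary : Matrix m m ℂ) else 0

/-- Fidelity `Fid(ρ,σ) = (Tr √(√ρ σ √ρ))² = ‖√σ √ρ‖₁²`. -/
def fid {m : Type*} [Fintype m] [DecidableEq m] (ρ σ : Matrix m m ℂ) : ℝ :=
  (traceNorm (msqrt σ * msqrt ρ)) ^ 2

/-- Density matrix. -/
def IsDensityMatrix {m : Type*} [Fintype m] (ρ : Matrix m m ℂ) : Prop :=
  ρ.PosSemidef ∧ ρ.trace = 1


lemma trace_ctms {a b : ℕ} (X : Matrix (Fin a) (Fin b) ℂ) :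
    (Xᴴ * X).trace = ((∑ j, ∑ i, Complex.normSq (X i j) : ℝ) : ℂ) := by
  simp [trace, mul_apply, diag, conjTranspose_apply, Complex.normSq_eq_conj_mul_self]

lemma quad (p q x y u v : ℝ) (hp : 0 < p) (hq : 0 < q) :
    (p - q)^2/(p + q) * (x^2 + y^2) ≤
      ((q*x+u)^2 + (q*y+v)^2)/q + ((p*x+u)^2 + (p*y+v)^2)/p := by
  rw [div_add_div _ _ (ne_of_gt hq) (ne_of_gt hp), div_mul_eq_mul_div,
    div_le_div_iff₀ (by positivity) (by positivity)]
  nlinarith [sq_nonneg ((p+q)*u + 2*p*q*x), sq_nonneg ((p+q)*v + 2*p*q*y), sq_nonneg (p-q),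
    mul_pos hp hq, sq_nonneg (x*(p-q)), sq_nonneg (y*(p-q))]

lemma core_ineq {d m : ℕ} (p : Fin d → ℝ) (hp : ∀ j, 0 ≤ p j) (hp1 : ∑ j, p j = 1)
    (N : Matrix (Fin d) (Fin m) ℂ) (hN : N * Nᴴ = Matrix.diagonal (fun j => (p j : ℂ)))
    (h : Matrix (Fin d) (Fin d) ℂ) (hh : h.IsHermitian)
    (B : Matrix (Fin m) (Fin m) ℂ) (hB : B.IsHermitian) :
    2 * ∑ j, ∑ k, (if 0 < p j + p k then (p j - p k)^2/(p j + p k) * Complex.normSq (h j k) else 0)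
      ≤ 4 * ((((h*N + N*B)ᴴ*(h*N + N*B)).trace).re - (((Nᴴ*(h*N + N*B)).trace).re)^2) := by
  set K := h * N + N * B with hKdef
  set S := N * B * Nᴴ with hSdef
  set T := K * Nᴴ with hTdef
  have hT : T = h * Matrix.diagonal (fun j => (p j : ℂ)) + S := by
    rw [hTdef, hKdef, Matrix.add_mul, Matrix.mul_assoc, hN, hSdef]
  have hTe : ∀ j k, T j k = (p k : ℂ) * h j k + S j k := by
    intro j k
    rw [hT]
    simp [Matrix.mul_diagonal, mul_comm]
  -- rows of N vanish where p vanishes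
  have hrow : ∀ j, p j = 0 → ∀ l, N j l = 0 := by
    intro j hj l
    have h1 : (N * Nᴴ) j j = (0 : ℂ) := by rw [hN]; simp [hj]
    rw [Matrix.mul_apply] at h1
    simp only [Matrix.conjTranspose_apply, Complex.mul_conj] at h1
    have h2 : ∑ l, Complex.normSq (N j l) = 0 := by
      have := congrArg Complex.re h1
      simpa [Complex.normSq_apply] using this
    have h3 := (Finset.sum_eq_zero_iff_of_nonneg (fun l _ => Complex.normSq_nonneg (N j l))).mp h2
    exact Complex.normSq_eq_zero.mp (h3 l (Finset.mem_univ l))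
  have hS0 : ∀ j k, p j = 0 ∨ p k = 0 → S j k = 0 := by
    intro j k hjk
    rcases hjk with hj | hk
    · rw [hSdef, Matrix.mul_apply]
      apply Finset.sum_eq_zero
      intro l _
      rw [Matrix.mul_apply]
      simp [hrow j hj]
    · rw [hSdef, Matrix.mul_apply]
      apply Finset.sum_eq_zero
      intro l _
      simp [Matrix.conjTranspose_apply, hrow k hk]
  have hSH : Sᴴ = S := by
    rw [hSdef, Matrix.conjTranspose_mul, Matrix.conjTranspose_mul, Matrix.conjTranspose_conjTranspose,
      hB.eq, Matrix.mul_assoc]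
  set dinv : Fin d → ℝ := fun j => if 0 < p j then (p j)⁻¹ else 0 with hdinv
  have hdinv_nonneg : ∀ j, 0 ≤ dinv j := by
    intro j; rw [hdinv]; dsimp only; split <;> positivity
  set Di : Matrix (Fin d) (Fin d) ℂ := Matrix.diagonal (fun j => (dinv j : ℂ)) with hDi
  set P := Nᴴ * Di * N with hP
  have hDiH : Diᴴ = Di := by
    rw [hDi, Matrix.diagonal_conjTranspose,
      show star (fun j => ((dinv j : ℝ) : ℂ)) = fun j => ((dinv j : ℝ) : ℂ) from
        funext fun j => by simp]
  have hDiD : Di * Matrix.diagonal (fun j => (p j : ℂ)) * Di = Di := by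
    have hfun : (fun j => ((dinv j : ℝ) : ℂ) * ((p j : ℝ) : ℂ) * ((dinv j : ℝ) : ℂ))
        = fun j => ((dinv j : ℝ) : ℂ) := by
      funext j
      by_cases hpj : 0 < p j
      · rw [hdinv]
        simp only [hpj, if_true]
        rw [← Complex.ofReal_mul, ← Complex.ofReal_mul]
        congr 1
        field_simp
      · rw [hdinv]
        simp [hpj]
    rw [hDi, Matrix.diagonal_mul_diagonal, Matrix.diagonal_mul_diagonal, hfun]
  have hPP : P * P = P := by
    rw [hP]
    calc Nᴴ * Di * N * (Nᴴ * Di * N) = Nᴴ * (Di * (N * Nᴴ) * Di) * N := by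
          simp only [Matrix.mul_assoc]
      _ = Nᴴ * Di * N := by rw [hN, hDiD]
  have hPH : Pᴴ = P := by
    rw [hP, Matrix.conjTranspose_mul, Matrix.conjTranspose_mul,
      Matrix.conjTranspose_conjTranspose, hDiH, ← Matrix.mul_assoc]
  have c2 : ∀ k, (T * Di * Tᴴ) k k = ((∑ j, dinv j * Complex.normSq (T k j) : ℝ) : ℂ) := by
    intro k
    rw [Matrix.mul_apply]
    push_cast
    apply Finset.sum_congr rfl
    intro j _
    rw [Matrix.conjTranspose_apply,
      show (T * Di) k j = T k j * (dinv j : ℂ) from by rw [hDi, Matrix.mul_diagonal],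
      mul_comm (T k j), mul_assoc, Complex.star_def, Complex.mul_conj]
  have keyP : ((Kᴴ * K * P).trace) = ((∑ k, ∑ j, dinv j * Complex.normSq (T k j) : ℝ) : ℂ) := by
    have c1 : (Kᴴ * K * P).trace = (T * Di * Tᴴ).trace := by
      rw [hP, hTdef, Matrix.conjTranspose_mul, Matrix.conjTranspose_conjTranspose]
      simp only [Matrix.mul_assoc]
      rw [Matrix.trace_mul_comm]
      simp only [Matrix.mul_assoc]
    rw [c1, Matrix.trace]
    push_cast
    exact Finset.sum_congr rfl fun k _ => by rw [Matrix.diag]; rw [c2 k]; push_cast; ring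
  set Q : Matrix (Fin m) (Fin m) ℂ := 1 - P with hQ
  have hQH : Qᴴ = Q := by rw [hQ, Matrix.conjTranspose_sub, Matrix.conjTranspose_one, hPH]
  have htr : (Kᴴ * K).trace = (Kᴴ * K * P).trace + ((K * Q)ᴴ * (K * Q)).trace := by
    have e1 : (K * Q)ᴴ * (K * Q) = Q * (Kᴴ * K) * Q := by
      rw [Matrix.conjTranspose_mul, hQH]
      simp only [Matrix.mul_assoc]
    have hQQ : Q * Q = Q := by
      rw [hQ, Matrix.sub_mul, Matrix.mul_sub, Matrix.mul_sub, hPP]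
      simp
    rw [e1, Matrix.trace_mul_cycle Q (Kᴴ * K) Q, hQQ,
      Matrix.trace_mul_comm Q (Kᴴ * K), ← Matrix.trace_add, ← Matrix.mul_add,
      show P + Q = 1 by rw [hQ]; abel, Matrix.mul_one]
  have key1 : (∑ k, ∑ j, dinv j * Complex.normSq (T k j)) ≤ ((Kᴴ * K).trace).re := by
    have h1 := congrArg Complex.re htr
    rw [keyP, trace_ctms (K * Q)] at h1
    simp only [Complex.add_re, Complex.ofReal_re] at h1
    rw [h1]
    have h2 : 0 ≤ ∑ j, ∑ i, Complex.normSq ((K * Q) i j) :=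
      Finset.sum_nonneg fun j _ => Finset.sum_nonneg fun i _ => Complex.normSq_nonneg _
    linarith
  have key2 : ((Nᴴ * K).trace).re = ∑ j, (T j j).re := by
    rw [Matrix.trace_mul_comm, ← hTdef, Matrix.trace, Complex.re_sum]
    rfl
  set a : Fin d → Fin d → ℝ := fun k j => dinv j * Complex.normSq (T k j) with ha
  set R : ℝ := ∑ j, (T j j).re with hR
  have hTjj0 : ∀ j, p j = 0 → T j j = 0 := by
    intro j hj
    rw [hTe, hS0 j j (Or.inl hj), hj]
    simp
  have ha_nonneg : ∀ k j, 0 ≤ a k j := by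
    intro k j
    rw [ha]
    have := hdinv_nonneg j
    have := Complex.normSq_nonneg (T k j)
    positivity
  have diagCS : R ^ 2 ≤ ∑ j, a j j := by
    set g : Fin d → ℝ := fun j => if 0 < p j then (T j j).re / Real.sqrt (p j) else 0 with hg
    have cg : ∀ j, (T j j).re = Real.sqrt (p j) * g j := by
      intro j
      rw [hg]
      by_cases hpj : 0 < p j
      · dsimp only
        rw [if_pos hpj]
        have hs : Real.sqrt (p j) ≠ 0 := ne_of_gt (Real.sqrt_pos.mpr hpj)
        field_simp
      · dsimp only
        rw [if_neg hpj]
        have hj0 : p j = 0 := le_antisymm (not_lt.mp hpj) (hp j)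
        rw [hTjj0 j hj0]
        simp
    have CS := Finset.sum_mul_sq_le_sq_mul_sq Finset.univ (fun j => Real.sqrt (p j)) g
    have e2 : ∑ j, Real.sqrt (p j) ^ 2 = 1 := by
      rw [← hp1]
      exact Finset.sum_congr rfl fun j _ => Real.sq_sqrt (hp j)
    have e3 : ∀ j, g j ^ 2 ≤ a j j := by
      intro j
      rw [hg, ha]
      by_cases hpj : 0 < p j
      · dsimp only
        rw [if_pos hpj, hdinv]
        dsimp only
        rw [if_pos hpj, div_pow, Real.sq_sqrt (hp j)]
        rw [div_le_iff₀ hpj] at *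
        have h4 : (T j j).re ^ 2 ≤ Complex.normSq (T j j) := by
          rw [Complex.normSq_apply]
          nlinarith [sq_nonneg (T j j).im]
        calc (T j j).re ^ 2 ≤ Complex.normSq (T j j) := h4
          _ = (p j)⁻¹ * Complex.normSq (T j j) * p j := by field_simp
      · dsimp only
        rw [if_neg hpj]
        simpa using ha_nonneg j j
    calc R ^ 2 = (∑ j, Real.sqrt (p j) * g j) ^ 2 := by
          rw [hR]; congr 1; exact Finset.sum_congr rfl fun j _ => cg j
      _ ≤ (∑ j, Real.sqrt (p j) ^ 2) * ∑ j, g j ^ 2 := CS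
      _ = ∑ j, g j ^ 2 := by rw [e2, one_mul]
      _ ≤ ∑ j, a j j := Finset.sum_le_sum fun j _ => e3 j
  have hconj : ∀ j k, h k j = (starRingEnd ℂ) (h j k) := fun j k => (hh.apply k j).symm
  have hSconj : ∀ j k, S k j = (starRingEnd ℂ) (S j k) := by
    intro j k
    have := congrFun (congrFun hSH k) j
    rw [Matrix.conjTranspose_apply] at this
    exact this.symm
  have off : ∀ j k, (if 0 < p j + p k then (p j - p k)^2/(p j + p k) * Complex.normSq (h j k) else 0)
      ≤ (if j = k then 0 else a j k + a k j) := by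
    intro j k
    by_cases hjk : j = k
    · subst hjk
      simp
    · rw [if_neg hjk]
      rcases (hp j).lt_or_eq with hpj | hpj
      · rcases (hp k).lt_or_eq with hpk | hpk
        · -- both positive
          rw [if_pos (by linarith : 0 < p j + p k)]
          have eTjk : T j k = (p k : ℂ) * h j k + S j k := hTe j k
          have eTkj : T k j = (starRingEnd ℂ) ((p j : ℂ) * h j k + S j k) := by
            rw [hTe, hconj j k, hSconj j k, map_add, _root_.map_mul, Complex.conj_ofReal]
          have najk : a j k = (((p k) * (h j k).re + (S j k).re)^2
              + ((p k) * (h j k).im + (S j k).im)^2) / (p k) := by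
            rw [ha]
            dsimp only
            rw [eTjk, hdinv]
            dsimp only
            rw [if_pos hpk, Complex.normSq_apply]
            simp only [Complex.add_re, Complex.add_im, Complex.re_ofReal_mul,
              Complex.im_ofReal_mul]
            field_simp
          have nakj : a k j = (((p j) * (h j k).re + (S j k).re)^2
              + ((p j) * (h j k).im + (S j k).im)^2) / (p j) := by
            rw [ha]
            dsimp only
            rw [eTkj, Complex.normSq_conj, hdinv]
            dsimp only
            rw [if_pos hpj, Complex.normSq_apply]
            simp only [Complex.add_re, Complex.add_im, Complex.re_ofReal_mul,
              Complex.im_ofReal_mul]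
            field_simp
          have nh : Complex.normSq (h j k) = (h j k).re^2 + (h j k).im^2 := by
            rw [Complex.normSq_apply]; ring
          rw [najk, nakj, nh]
          exact quad (p j) (p k) (h j k).re (h j k).im (S j k).re (S j k).im hpj hpk
        · -- p j > 0, p k = 0
          rw [if_pos (by rw [← hpk] at *; linarith : 0 < p j + p k)]
          have hS1 : S j k = 0 := hS0 j k (Or.inr hpk.symm)
          have hS2 : S k j = 0 := hS0 k j (Or.inl hpk.symm)
          have eTkj : T k j = (p j : ℂ) * h k j := by rw [hTe, hS2, add_zero]
          have e5 : a k j = p j * Complex.normSq (h j k) := by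
            rw [ha]
            dsimp only
            rw [eTkj, hconj j k, Complex.normSq_mul, Complex.normSq_conj, hdinv]
            dsimp only
            rw [if_pos hpj, Complex.normSq_ofReal]
            field_simp
          have e6 : (p j - p k)^2/(p j + p k) * Complex.normSq (h j k)
              = p j * Complex.normSq (h j k) := by
            rw [← hpk]
            field_simp
            ring
          rw [e6]
          have := ha_nonneg j k
          rw [e5]
          linarith
      · rcases (hp k).lt_or_eq with hpk | hpk
        · -- p j = 0, p k > 0
          rw [if_pos (by rw [← hpj] at *; linarith : 0 < p j + p k)]
          have hS1 : S j k = 0 := hS0 j k (Or.inl hpj.symm)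
          have eTjk : T j k = (p k : ℂ) * h j k := by rw [hTe, hS1, add_zero]
          have e5 : a j k = p k * Complex.normSq (h j k) := by
            rw [ha]
            dsimp only
            rw [eTjk, Complex.normSq_mul, hdinv]
            dsimp only
            rw [if_pos hpk, Complex.normSq_ofReal]
            field_simp
          have e6 : (p j - p k)^2/(p j + p k) * Complex.normSq (h j k)
              = p k * Complex.normSq (h j k) := by
            rw [← hpj]
            field_simp
            ring
          rw [e6]
          have := ha_nonneg k j
          rw [e5]
          linarith
        · -- both zero
          rw [if_neg (by rw [← hpj, ← hpk]; simp : ¬ 0 < p j + p k)]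
          have := ha_nonneg j k
          have := ha_nonneg k j
          linarith
  -- assemble
  set A2 : ℝ := ∑ k, ∑ j, a k j with hA2
  have sum_ite : ∑ j, ∑ k, (if j = k then (0:ℝ) else a j k + a k j)
      = 2 * A2 - 2 * ∑ j, a j j := by
    have inner : ∀ j, ∑ k, (if j = k then (0:ℝ) else a j k + a k j)
        = (∑ k, (a j k + a k j)) - (a j j + a j j) := by
      intro j
      have e7 : ∀ k, (if j = k then (0:ℝ) else a j k + a k j)
          = (a j k + a k j) - (if j = k then (a j k + a k j) else 0) := by
        intro k
        by_cases hjk : j = k <;> simp [hjk]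
      rw [Finset.sum_congr rfl fun k _ => e7 k, Finset.sum_sub_distrib,
        Finset.sum_ite_eq Finset.univ j (fun k => a j k + a k j), if_pos (Finset.mem_univ j)]
    rw [Finset.sum_congr rfl fun j _ => inner j, Finset.sum_sub_distrib]
    simp only [Finset.sum_add_distrib]
    have e8 : ∑ j, ∑ k, a j k = A2 := rfl
    have e9 : ∑ j : Fin d, ∑ k : Fin d, a k j = A2 := by rw [hA2]; exact Finset.sum_comm
    rw [e8, e9]
    ring
  have Fbound : ∑ j, ∑ k,
      (if 0 < p j + p k then (p j - p k)^2/(p j + p k) * Complex.normSq (h j k) else 0)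
      ≤ 2 * A2 - 2 * ∑ j, a j j := by
    rw [← sum_ite]
    exact Finset.sum_le_sum fun j _ => Finset.sum_le_sum fun k _ => off j k
  rw [key2]
  have key1' : A2 ≤ ((Kᴴ * K).trace).re := key1
  linarith

lemma trace_ctms' {a b : ℕ} (X : Matrix (Fin a) (Fin b) ℂ) :
    (Xᴴ * X).trace = ((∑ j, ∑ i, Complex.normSq (X i j) : ℝ) : ℂ) := by
  simp [trace, mul_apply, diag, conjTranspose_apply, Complex.normSq_eq_conj_mul_self]

lemma core_eq {d : ℕ} (p : Fin d → ℝ) (hp : ∀ j, 0 ≤ p j)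
    (h : Matrix (Fin d) (Fin d) ℂ) (hh : h.IsHermitian) :
    ∃ (N B : Matrix (Fin d) (Fin d) ℂ), B.IsHermitian ∧
      N * Nᴴ = Matrix.diagonal (fun j => (p j : ℂ)) ∧
      4 * ((((h*N + N*B)ᴴ*(h*N + N*B)).trace).re - (((Nᴴ*(h*N + N*B)).trace).re)^2)
        = 2 * ∑ j, ∑ k, (if 0 < p j + p k then
            (p j - p k)^2/(p j + p k) * Complex.normSq (h j k) else 0) := by
  set c : Fin d → Fin d → ℝ :=
    fun j k => if 0 < p j + p k then (-2) * Real.sqrt (p j) * Real.sqrt (p k) / (p j + p k) else 0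
    with hc
  refine ⟨Matrix.diagonal (fun j => ((Real.sqrt (p j) : ℝ) : ℂ)),
    Matrix.of (fun j k => ((c j k : ℝ) : ℂ) * h j k), ?_, ?_, ?_⟩
  · -- Hermitian
    have hsym : ∀ j k : Fin d, c k j = c j k := by
      intro j k
      rw [hc]
      dsimp only
      rw [add_comm (p k) (p j)]
      congr 1
      ring
    ext j k
    simp only [conjTranspose_apply, Matrix.of_apply, star_mul', Complex.star_def,
      Complex.conj_ofReal]
    rw [show (starRingEnd ℂ) (h k j) = h j k from hh.apply j k, hsym j k]
  · rw [Matrix.diagonal_conjTranspose,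
      show (star fun j => ((Real.sqrt (p j) : ℝ) : ℂ)) = fun j => ((Real.sqrt (p j) : ℝ) : ℂ) from
        funext fun j => by simp [Complex.conj_ofReal],
      Matrix.diagonal_mul_diagonal,
      show (fun j => ((Real.sqrt (p j) : ℝ) : ℂ) * ((Real.sqrt (p j) : ℝ) : ℂ))
          = fun j => ((p j : ℝ) : ℂ) from
        funext fun j => by rw [← Complex.ofReal_mul, Real.mul_self_sqrt (hp j)]]
  · set N : Matrix (Fin d) (Fin d) ℂ := Matrix.diagonal (fun j => ((Real.sqrt (p j) : ℝ) : ℂ))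
      with hNdef
    set B : Matrix (Fin d) (Fin d) ℂ := Matrix.of (fun j k => ((c j k : ℝ) : ℂ) * h j k)
      with hBdef
    set K := h * N + N * B with hKdef
    have hKe : ∀ j k, K j k = ((if 0 < p j + p k then
        Real.sqrt (p k) * (p k - p j) / (p j + p k) else 0 : ℝ) : ℂ) * h j k := by
      intro j k
      rw [hKdef]
      simp only [Matrix.add_apply, hNdef, Matrix.mul_diagonal, Matrix.diagonal_mul,
        hBdef, Matrix.of_apply, hc]
      by_cases hcond : 0 < p j + p k
      · rw [if_pos hcond, if_pos hcond]
        have hs : ((p j : ℂ) + (p k : ℂ)) ≠ 0 := by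
          rw [← Complex.ofReal_add]
          exact_mod_cast ne_of_gt hcond
        have hpj2 : (Real.sqrt (p j) : ℂ) * (Real.sqrt (p j) : ℂ) = (p j : ℂ) := by
          rw [← Complex.ofReal_mul, Real.mul_self_sqrt (hp j)]
        push_cast
        field_simp
        linear_combination (-2 * (Real.sqrt (p k) : ℂ) * h j k) * hpj2
      · rw [if_neg hcond, if_neg hcond]
        have hj0 : p j = 0 := by
          have := hp j; have := hp k; push_neg at hcond; linarith
        have hk0 : p k = 0 := by
          have := hp j; have := hp k; push_neg at hcond; linarith
        rw [hj0, hk0]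
        norm_num
    have hNH : Nᴴ = N := by
      rw [hNdef, Matrix.diagonal_conjTranspose,
        show (star fun j => ((Real.sqrt (p j) : ℝ) : ℂ)) = fun j => ((Real.sqrt (p j) : ℝ) : ℂ) from
          funext fun j => by simp [Complex.conj_ofReal]]
    set t : Fin d → Fin d → ℝ := fun j k => if 0 < p j + p k then
        p k * (p k - p j)^2/(p j + p k)^2 * Complex.normSq (h j k) else 0 with ht
    have tr1 : ((Kᴴ * K).trace).re = ∑ j, ∑ k, t j k := by
      rw [trace_ctms' K]
      rw [Complex.ofReal_re]
      rw [Finset.sum_comm]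
      apply Finset.sum_congr rfl
      intro j _
      apply Finset.sum_congr rfl
      intro k _
      rw [hKe j k, Complex.normSq_mul, Complex.normSq_ofReal]
      simp only [ht]
      by_cases hcond : 0 < p j + p k
      · rw [if_pos hcond, if_pos hcond]
        have hs : p j + p k ≠ 0 := ne_of_gt hcond
        have hsq : Real.sqrt (p k) * Real.sqrt (p k) = p k := Real.mul_self_sqrt (hp k)
        have e : (Real.sqrt (p k) * (p k - p j) / (p j + p k))
            * (Real.sqrt (p k) * (p k - p j) / (p j + p k))
            = p k * (p k - p j)^2/(p j + p k)^2 := by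
          rw [div_mul_div_comm, sq (p j + p k)]
          congr 1
          linear_combination ((p k - p j)^2) * hsq
        rw [e]
      · rw [if_neg hcond, if_neg hcond]
        simp
    have tr2 : ((Nᴴ * K).trace) = 0 := by
      rw [hNH, Matrix.trace]
      apply Finset.sum_eq_zero
      intro j _
      rw [Matrix.diag]
      rw [show (N * K) j j = (Real.sqrt (p j) : ℂ) * K j j from by
        rw [hNdef, Matrix.diagonal_mul]]
      rw [hKe j j]
      by_cases hcond : 0 < p j + p j
      · rw [if_pos hcond]
        simp
      · rw [if_neg hcond]
        simp
    rw [tr1, tr2]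
    simp only [Complex.zero_re]
    have main : (∑ j, ∑ k, t j k) + (∑ j, ∑ k, t j k) = ∑ j, ∑ k,
        (if 0 < p j + p k then (p j - p k)^2/(p j + p k) * Complex.normSq (h j k) else 0) := by
      nth_rewrite 2 [show (∑ j, ∑ k, t j k) = ∑ j, ∑ k, t k j from Finset.sum_comm]
      rw [← Finset.sum_add_distrib]
      apply Finset.sum_congr rfl
      intro j _
      rw [← Finset.sum_add_distrib]
      apply Finset.sum_congr rfl
      intro k _
      rw [ht]
      dsimp only
      by_cases hcond : 0 < p j + p k
      · rw [if_pos hcond, if_pos hcond, if_pos (by linarith : 0 < p k + p j)]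
        have hs : p j + p k ≠ 0 := ne_of_gt hcond
        have hnsq : Complex.normSq (h k j) = Complex.normSq (h j k) := by
          rw [← hh.apply j k, Complex.star_def, Complex.normSq_conj]
        rw [hnsq, add_comm (p k) (p j)]
        field_simp
        ring
      · rw [if_neg hcond, if_neg hcond, if_neg (by rw [add_comm]; exact hcond)]
        simp
    linarith


lemma dot_as_trace {d m : ℕ} (M X : Matrix (Fin d) (Fin m) ℂ) :
    star (fun q : Fin d × Fin m => M q.1 q.2) ⬝ᵥ (fun q => X q.1 q.2) = (Mᴴ * X).trace := by
  simp [dotProduct, Fintype.sum_prod_type, trace, mul_apply, diag, conjTranspose_apply]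
  rw [Finset.sum_comm]

lemma mulVec_kron {d m : ℕ} (A : Matrix (Fin d) (Fin d) ℂ) (B : Matrix (Fin m) (Fin m) ℂ)
    (M : Matrix (Fin d) (Fin m) ℂ) :
    ((A ⊗ₖ B) *ᵥ (fun q => M q.1 q.2)) = fun q => (A * M * Bᵀ) q.1 q.2 := by
  funext q
  simp [mulVec, dotProduct, kroneckerMap_apply, mul_apply, Fintype.sum_prod_type,
    Finset.mul_sum, Finset.sum_mul, transpose_apply]
  rw [Finset.sum_comm]
  congr 1; ext i; congr 1; ext j; ring

lemma varVec_formula {d m : ℕ} (HS : Matrix (Fin d) (Fin d) ℂ) (HA : Matrix (Fin m) (Fin m) ℂ)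
    (M : Matrix (Fin d) (Fin m) ℂ) (hHS : HS.IsHermitian) (hHA : HA.IsHermitian) :
    varVec (HS ⊗ₖ (1 : Matrix (Fin m) (Fin m) ℂ) + (1 : Matrix (Fin d) (Fin d) ℂ) ⊗ₖ HA)
      (fun q => M q.1 q.2) =
    (((HS * M + M * HAᵀ)ᴴ * (HS * M + M * HAᵀ)).trace).re
      - (((Mᴴ * (HS * M + M * HAᵀ)).trace).re) ^ 2 := by
  set K := HS * M + M * HAᵀ with hK
  set Htot := HS ⊗ₖ (1 : Matrix (Fin m) (Fin m) ℂ) + (1 : Matrix (Fin d) (Fin d) ℂ) ⊗ₖ HA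
  have h1 : ∀ X : Matrix (Fin d) (Fin m) ℂ,
      Htot *ᵥ (fun q => X q.1 q.2) = fun q => (HS * X + X * HAᵀ) q.1 q.2 := by
    intro X
    rw [show Htot *ᵥ (fun q => X q.1 q.2)
        = (HS ⊗ₖ (1 : Matrix (Fin m) (Fin m) ℂ)) *ᵥ (fun q => X q.1 q.2)
          + ((1 : Matrix (Fin d) (Fin d) ℂ) ⊗ₖ HA) *ᵥ (fun q => X q.1 q.2) from
      add_mulVec _ _ _, mulVec_kron, mulVec_kron]
    funext q
    simp [Matrix.transpose_one]
  have h2 : (Htot * Htot) *ᵥ (fun q => M q.1 q.2) = fun q => (HS * K + K * HAᵀ) q.1 q.2 := by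
    rw [← mulVec_mulVec, h1 M, ← hK, h1 K]
  have htr : (Mᴴ * (HS * K + K * HAᵀ)).trace = (Kᴴ * K).trace := by
    have hKH : Kᴴ = Mᴴ * HS + HAᵀ * Mᴴ := by
      rw [hK, conjTranspose_add, conjTranspose_mul, conjTranspose_mul, hHS.eq,
        hHA.transpose.eq]
    rw [hKH]
    simp only [Matrix.mul_add, Matrix.add_mul, trace_add, ← Matrix.mul_assoc]
    congr 1
    rw [trace_mul_cycle]
  unfold varVec
  rw [h2, h1 M, ← hK, dot_as_trace, dot_as_trace, htr]

lemma unitary_frame {d m : ℕ} {U : Matrix (Fin d) (Fin d) ℂ} (hUU : U * Uᴴ = 1)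
    (HS : Matrix (Fin d) (Fin d) ℂ) (M : Matrix (Fin d) (Fin m) ℂ) (C : Matrix (Fin m) (Fin m) ℂ) :
    HS * M + M * C = U * ((Uᴴ * HS * U) * (Uᴴ * M) + (Uᴴ * M) * C) := by
  have e0 : ∀ {m' : ℕ} (X : Matrix (Fin d) (Fin m') ℂ), U * (Uᴴ * X) = X := fun X => by
    rw [← Matrix.mul_assoc, hUU, Matrix.one_mul]
  rw [Matrix.mul_add]
  congr 1
  · simp only [Matrix.mul_assoc]
    rw [e0, e0]
  · simp only [Matrix.mul_assoc]
    rw [e0]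

lemma frame_trace1 {d m : ℕ} {U : Matrix (Fin d) (Fin d) ℂ} (hUU' : Uᴴ * U = 1)
    (X : Matrix (Fin d) (Fin m) ℂ) : ((U * X)ᴴ * (U * X)) = Xᴴ * X := by
  rw [conjTranspose_mul]
  simp only [Matrix.mul_assoc]
  rw [← Matrix.mul_assoc Uᴴ U X, hUU', Matrix.one_mul]

lemma frame_trace2 {d m : ℕ} (U : Matrix (Fin d) (Fin d) ℂ)
    (M X : Matrix (Fin d) (Fin m) ℂ) : (Uᴴ * M)ᴴ * X = Mᴴ * (U * X) := by
  rw [conjTranspose_mul, conjTranspose_conjTranspose, Matrix.mul_assoc]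


theorem qfi_min_variance_over_purifications
    {d : ℕ} (ρ HS : Matrix (Fin d) (Fin d) ℂ)
    (hρ : ρ.PosSemidef) (hρtr : ρ.trace = 1) (hHS : HS.IsHermitian) :
    (∀ (m : ℕ), 0 < m → ∀ (M : Matrix (Fin d) (Fin m) ℂ), M * Mᴴ = ρ →
      ∀ (HA : Matrix (Fin m) (Fin m) ℂ), HA.IsHermitian →
        QFI hρ.isHermitian HS ≤
          4 * varVec (HS ⊗ₖ (1 : Matrix (Fin m) (Fin m) ℂ) +
              (1 : Matrix (Fin d) (Fin d) ℂ) ⊗ₖ HA) (fun q => M q.1 q.2)) ∧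
    (∃ (M : Matrix (Fin d) (Fin d) ℂ) (HA : Matrix (Fin d) (Fin d) ℂ),
      M * Mᴴ = ρ ∧ HA.IsHermitian ∧
      4 * varVec (HS ⊗ₖ (1 : Matrix (Fin d) (Fin d) ℂ) +
          (1 : Matrix (Fin d) (Fin d) ℂ) ⊗ₖ HA) (fun q => M q.1 q.2) =
        QFI hρ.isHermitian HS) := by
  have hρ' : ρ.IsHermitian := hρ.isHermitian
  set U : Matrix (Fin d) (Fin d) ℂ :=
    (Matrix.IsHermitian.eigenvectorUnitary hρ.isHermitian : Matrix (Fin d) (Fin d) ℂ) with hUdef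
  set pe : Fin d → ℝ := hρ.isHermitian.eigenvalues with hpe
  have hUU : U * Uᴴ = 1 := by
    rw [hUdef, ← Matrix.star_eq_conjTranspose]
    exact (Matrix.mem_unitaryGroup_iff).mp
      (Matrix.IsHermitian.eigenvectorUnitary hρ.isHermitian).2
  have hUU' : Uᴴ * U = 1 := by
    rw [hUdef, ← Matrix.star_eq_conjTranspose]
    exact (Matrix.mem_unitaryGroup_iff').mp
      (Matrix.IsHermitian.eigenvectorUnitary hρ.isHermitian).2
  have hdiag : Uᴴ * ρ * U = Matrix.diagonal (fun j => ((pe j : ℝ) : ℂ)) := by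
    rw [hUdef, ← Matrix.star_eq_conjTranspose]
    have := hρ.isHermitian.conjStarAlgAut_star_eigenvectorUnitary
    simpa [hpe, Function.comp_def] using this
  have hp0 : ∀ j, 0 ≤ pe j := fun j => hρ.eigenvalues_nonneg j
  have hp1 : ∑ j, pe j = 1 := by
    have t1 : (Matrix.diagonal (fun j => ((pe j : ℝ) : ℂ))).trace = ρ.trace := by
      rw [← hdiag, Matrix.trace_mul_cycle, hUU, Matrix.one_mul]
    rw [hρtr, Matrix.trace_diagonal] at t1
    exact_mod_cast t1
  set h : Matrix (Fin d) (Fin d) ℂ := Uᴴ * HS * U with hhdef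
  have hhherm : h.IsHermitian := by
    show hᴴ = h
    rw [hhdef, conjTranspose_mul, conjTranspose_mul, conjTranspose_conjTranspose, hHS.eq,
      ← Matrix.mul_assoc]
  have hentry : ∀ j k : Fin d,
      (star (fun i => (hρ.isHermitian.eigenvectorBasis j) i)) ⬝ᵥ
        (HS *ᵥ (fun i => (hρ.isHermitian.eigenvectorBasis k) i)) = h j k := by
    intro j k
    rw [hhdef, hUdef]
    simp only [Matrix.mul_apply, Matrix.conjTranspose_apply, Matrix.mulVec, dotProduct,
      Pi.star_apply, Matrix.IsHermitian.eigenvectorUnitary_apply, Finset.sum_mul,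
      Finset.mul_sum, mul_assoc]
    rw [Finset.sum_comm]
  have hQFI : QFI hρ.isHermitian HS = 2 * ∑ j, ∑ k, (if 0 < pe j + pe k then
      (pe j - pe k)^2/(pe j + pe k) * Complex.normSq (h j k) else 0) := by
    unfold QFI qfiOf
    congr 1
    apply Finset.sum_congr rfl
    intro j _
    apply Finset.sum_congr rfl
    intro k _
    rw [hentry j k]
  constructor
  · intro m hm M hM HA hHA
    rw [varVec_formula HS HA M hHS hHA, hQFI]
    have hfr := unitary_frame hUU HS M HAᵀ
    have t1 : ((HS * M + M * HAᵀ)ᴴ * (HS * M + M * HAᵀ))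
        = ((h * (Uᴴ * M) + (Uᴴ * M) * HAᵀ)ᴴ * (h * (Uᴴ * M) + (Uᴴ * M) * HAᵀ)) := by
      rw [hfr, frame_trace1 hUU', hhdef]
    have t2 : (Mᴴ * (HS * M + M * HAᵀ)) = ((Uᴴ * M)ᴴ * (h * (Uᴴ * M) + (Uᴴ * M) * HAᵀ)) := by
      rw [hfr, frame_trace2, hhdef]
    rw [t1, t2]
    have hN : (Uᴴ * M) * (Uᴴ * M)ᴴ = Matrix.diagonal (fun j => ((pe j : ℝ) : ℂ)) := by
      rw [conjTranspose_mul, conjTranspose_conjTranspose, ← hdiag, ← hM]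
      simp only [Matrix.mul_assoc]
    exact core_ineq pe hp0 hp1 (Uᴴ * M) hN h hhherm HAᵀ hHA.transpose
  · obtain ⟨N, B, hBH, hNN, heq⟩ := core_eq pe hp0 h hhherm
    refine ⟨U * N, Bᵀ, ?_, hBH.transpose, ?_⟩
    · rw [conjTranspose_mul, Matrix.mul_assoc, ← Matrix.mul_assoc N Nᴴ Uᴴ, hNN,
        ← Matrix.mul_assoc]
      have : ρ = U * (Uᴴ * ρ * U) * Uᴴ := by
        simp only [Matrix.mul_assoc]
        rw [hUU, Matrix.mul_one, ← Matrix.mul_assoc, hUU, Matrix.one_mul]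
      rw [hdiag] at this
      exact this.symm
    · rw [varVec_formula HS Bᵀ (U * N) hHS hBH.transpose, hQFI]
      have hUN : Uᴴ * (U * N) = N := by rw [← Matrix.mul_assoc, hUU', Matrix.one_mul]
      have hfr := unitary_frame hUU HS (U * N) (Bᵀᵀ)
      rw [hUN, transpose_transpose] at hfr
      have t1 : ((HS * (U * N) + (U * N) * Bᵀᵀ)ᴴ * (HS * (U * N) + (U * N) * Bᵀᵀ))
          = ((h * N + N * B)ᴴ * (h * N + N * B)) := by
        rw [transpose_transpose, hfr, frame_trace1 hUU']
      have t2 : ((U * N)ᴴ * (HS * (U * N) + (U * N) * Bᵀᵀ))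
          = (Nᴴ * (h * N + N * B)) := by
        rw [transpose_transpose, hfr, ← frame_trace2, hUN]
      rw [t1, t2]
      exact heq


end
end

section
/- (Theorem 4, first part: quantum Fisher information is four times the convex roof of the variance.) Let ρ be a d×d density matrix and H an Hermitian d×d matrix. (a) For every positive integer K, every probability vector (q_1,…,q_K) with all q_k > 0 and Σ_k q_k = 1, and all unit vectors η_1,…,η_K ∈ ℂ^d with Σ_k q_k |η_k⟩⟨η_k| = ρ, one has 4·Σ_k q_k V_H(η_k) ≥ F_H(ρ). (b) There exists such a finite ensemble {(q_k, η_k)} for which 4·Σ_k q_k V_H(η_k) = F_H(ρ). -/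
open Matrix Complex Filter Kronecker
open scoped ComplexOrder

noncomputable section

namespace QfiAux

variable {d : ℕ}


def rr (p : Fin d → ℝ) (j l : Fin d) : ℝ :=
  if 0 < p j + p l then 2 * Real.sqrt (p j * p l) / (p j + p l) else 0

lemma rr_symm (p : Fin d → ℝ) (j l : Fin d) : rr p j l = rr p l j := by
  unfold rr; rw [add_comm (p l), mul_comm (p l)]

lemma rr_zero_right (p : Fin d → ℝ) (j l : Fin d) (h : p l = 0) : rr p j l = 0 := by
  unfold rr; split <;> simp [h]

lemma sqrt_mul_sqrt (p : Fin d → ℝ) (hp : ∀ j, 0 ≤ p j) (j l : Fin d) :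
    Real.sqrt (p j) * Real.sqrt (p l) = (p j * rr p j l + rr p j l * p l) / 2 := by
  unfold rr
  by_cases h : 0 < p j + p l
  · rw [if_pos h, ← Real.sqrt_mul (hp j)]
    field_simp
  · have hj : p j = 0 := by nlinarith [hp j, hp l]
    have hl : p l = 0 := by nlinarith [hp j, hp l]
    rw [if_neg h]
    simp [hj, hl]

lemma pointwise_g (p : Fin d → ℝ) (hp : ∀ j, 0 ≤ p j) (j l : Fin d) :
    (if 0 < p j + p l then (p j - p l) ^ 2 / (p j + p l) else 0)
      = (p j + p l) * (1 - rr p j l ^ 2) := by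
  unfold rr
  by_cases h : 0 < p j + p l
  · rw [if_pos h, if_pos h]
    have hs : Real.sqrt (p j * p l) ^ 2 = p j * p l :=
      Real.sq_sqrt (mul_nonneg (hp j) (hp l))
    field_simp
    nlinarith [hs]
  · have hj : p j = 0 := by nlinarith [hp j, hp l]
    have hl : p l = 0 := by nlinarith [hp j, hp l]
    rw [if_neg h, if_neg h]
    simp [hj, hl]

lemma sum_symmetrize (p : Fin d → ℝ) (N : Fin d → Fin d → ℝ) (hN : ∀ j l, N j l = N l j) :
    ∑ j, ∑ l, (p j + p l) * N j l = 2 * ∑ j, ∑ l, p j * N j l := by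
  have h1 : ∑ j, ∑ l, p l * N j l = ∑ j, ∑ l, p j * N j l := by
    rw [Finset.sum_comm]
    exact Finset.sum_congr rfl fun j _ => Finset.sum_congr rfl fun l _ => by rw [hN]
  have h2 : ∑ j, ∑ l, (p j + p l) * N j l
      = (∑ j, ∑ l, p j * N j l) + ∑ j, ∑ l, p l * N j l := by
    rw [← Finset.sum_add_distrib]
    exact Finset.sum_congr rfl fun j _ => by
      rw [← Finset.sum_add_distrib]
      exact Finset.sum_congr rfl fun l _ => by ring
  rw [h2, h1]; ring

lemma qfi_eq (p : Fin d → ℝ) (hp : ∀ j, 0 ≤ p j) (A : Matrix (Fin d) (Fin d) ℂ)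
    (hA : ∀ j l, (starRingEnd ℂ) (A j l) = A l j) :
    2 * (∑ j, ∑ l, if 0 < p j + p l then (p j - p l) ^ 2 / (p j + p l) * normSq (A j l) else 0)
      = 4 * ((∑ j, ∑ l, p j * normSq (A j l)) - ∑ j, ∑ l, p j * rr p j l ^ 2 * normSq (A j l)) := by
  have hNsym : ∀ j l, (1 - rr p j l ^ 2) * normSq (A j l)
      = (1 - rr p l j ^ 2) * normSq (A l j) := by
    intro j l
    rw [rr_symm, ← hA j l, normSq_conj]
  have key := sum_symmetrize p (fun j l => (1 - rr p j l ^ 2) * normSq (A j l)) hNsym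
  have h1 : ∀ j l, (if 0 < p j + p l then (p j - p l) ^ 2 / (p j + p l) * normSq (A j l) else 0)
      = (p j + p l) * ((1 - rr p j l ^ 2) * normSq (A j l)) := by
    intro j l
    rw [← mul_assoc, ← pointwise_g p hp j l]
    split <;> simp
  calc 2 * (∑ j, ∑ l, if 0 < p j + p l then (p j - p l) ^ 2 / (p j + p l) * normSq (A j l) else 0)
      = 2 * ∑ j, ∑ l, (p j + p l) * ((1 - rr p j l ^ 2) * normSq (A j l)) := by
        congr 1
        exact Finset.sum_congr rfl fun j _ => Finset.sum_congr rfl fun l _ => h1 j l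
    _ = 2 * (2 * ∑ j, ∑ l, p j * ((1 - rr p j l ^ 2) * normSq (A j l))) := by rw [key]
    _ = 4 * ((∑ j, ∑ l, p j * normSq (A j l)) - ∑ j, ∑ l, p j * rr p j l ^ 2 * normSq (A j l)) := by
        rw [← Finset.sum_sub_distrib]
        have h3 : ∀ j : Fin d, ∑ l, p j * ((1 - rr p j l ^ 2) * normSq (A j l))
            = ∑ l, (p j * normSq (A j l) - p j * rr p j l ^ 2 * normSq (A j l)) :=
          fun j => Finset.sum_congr rfl fun l _ => by ring
        rw [Finset.sum_congr rfl fun j _ => (h3 j).trans (Finset.sum_sub_distrib _ _)]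
        ring

/-- Cauchy–Schwarz for finite complex sums, normSq form. -/
lemma cs_normSq (x y : Fin d → ℂ) :
    normSq (∑ j, (starRingEnd ℂ) (x j) * y j) ≤ (∑ j, normSq (x j)) * (∑ j, normSq (y j)) := by
  set X : EuclideanSpace ℂ (Fin d) := (WithLp.equiv 2 (Fin d → ℂ)).symm x with hX
  set Y : EuclideanSpace ℂ (Fin d) := (WithLp.equiv 2 (Fin d → ℂ)).symm y with hY
  have h := norm_inner_le_norm (𝕜 := ℂ) X Y
  have hinner : (inner (𝕜 := ℂ) X Y) = ∑ j, (starRingEnd ℂ) (x j) * y j := by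
    rw [PiLp.inner_apply]
    simp only [RCLike.inner_apply']
    rfl
  have hx : ‖X‖ ^ 2 = ∑ j, normSq (x j) := by
    rw [EuclideanSpace.norm_eq, Real.sq_sqrt (by positivity)]
    refine Finset.sum_congr rfl fun j _ => ?_
    show ‖x j‖ ^ 2 = _
    rw [Complex.sq_norm]
  have hy : ‖Y‖ ^ 2 = ∑ j, normSq (y j) := by
    rw [EuclideanSpace.norm_eq, Real.sq_sqrt (by positivity)]
    refine Finset.sum_congr rfl fun j _ => ?_
    show ‖y j‖ ^ 2 = _
    rw [Complex.sq_norm]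
  calc normSq (∑ j, (starRingEnd ℂ) (x j) * y j)
      = ‖∑ j, (starRingEnd ℂ) (x j) * y j‖ ^ 2 := by
        rw [Complex.normSq_eq_norm_sq]
    _ ≤ (‖X‖ * ‖Y‖) ^ 2 := by
        apply pow_le_pow_left₀ (norm_nonneg _)
        rw [← hinner]; exact h
    _ = (∑ j, normSq (x j)) * (∑ j, normSq (y j)) := by
        rw [mul_pow, hx, hy]

lemma dot_expand (A : Matrix (Fin d) (Fin d) ℂ) (x : Fin d → ℂ) :
    star x ⬝ᵥ (A *ᵥ x) = ∑ j, ∑ l, (starRingEnd ℂ) (x j) * A j l * x l := by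
  simp only [dotProduct, mulVec, Pi.star_apply, Finset.mul_sum, RCLike.star_def]
  exact Finset.sum_congr rfl fun j _ => Finset.sum_congr rfl fun l _ => by ring

lemma dot2_expand (A : Matrix (Fin d) (Fin d) ℂ) (x : Fin d → ℂ) :
    star x ⬝ᵥ ((A * A) *ᵥ x) = ∑ j, ∑ a, ∑ l, (starRingEnd ℂ) (x j) * A j a * A a l * x l := by
  simp only [dotProduct, mulVec, Pi.star_apply, Matrix.mul_apply, Finset.mul_sum,
    Finset.sum_mul, RCLike.star_def]
  refine Finset.sum_congr rfl fun j _ => ?_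
  rw [Finset.sum_comm]
  exact Finset.sum_congr rfl fun a _ => Finset.sum_congr rfl fun l _ => by ring

end QfiAux

namespace QfiAux

lemma core_ineq {d K : ℕ} (p : Fin d → ℝ) (hp : ∀ j, 0 ≤ p j)
    (A : Matrix (Fin d) (Fin d) ℂ) (hA : ∀ j l, (starRingEnd ℂ) (A j l) = A l j)
    (q : Fin K → ℝ) (c : Fin K → Fin d → ℂ) (hq : ∀ k, 0 < q k)
    (hunit : ∀ k, ∑ j, normSq (c k j) = 1)
    (hdec : ∀ j l, ∑ k, (q k : ℂ) * (c k j * (starRingEnd ℂ) (c k l))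
      = if j = l then (p j : ℂ) else 0) :
    (∑ j, ∑ l, p j * normSq (A j l)) - (∑ j, ∑ l, p j * rr p j l ^ 2 * normSq (A j l))
      ≤ ∑ k, q k * varVec A (c k) := by
  classical
  have hsq : ∀ j, (Real.sqrt (p j) : ℂ) * (Real.sqrt (p j) : ℂ) = (p j : ℂ) := by
    intro j
    rw [← Complex.ofReal_mul, Real.mul_self_sqrt (hp j)]
  have hdiagR : ∀ j, ∑ k, q k * normSq (c k j) = p j := by
    intro j
    have h := hdec j j
    rw [if_pos rfl] at h
    have h2 : ∀ k, (q k : ℂ) * (c k j * (starRingEnd ℂ) (c k j))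
        = ((q k * normSq (c k j) : ℝ) : ℂ) := by
      intro k
      rw [Complex.mul_conj]
      push_cast
      ring
    rw [Finset.sum_congr rfl fun k _ => h2 k, ← Complex.ofReal_sum] at h
    exact_mod_cast h
  have hsupp : ∀ j, p j = 0 → ∀ k, c k j = 0 := by
    intro j hj k
    have h0 : ∑ k, q k * normSq (c k j) = 0 := by rw [hdiagR j, hj]
    have hterm : q k * normSq (c k j) = 0 :=
      (Finset.sum_eq_zero_iff_of_nonneg (fun k _ =>
        mul_nonneg (hq k).le (normSq_nonneg _))).1 h0 k (Finset.mem_univ k)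
    have : normSq (c k j) = 0 := by
      rcases mul_eq_zero.1 hterm with h | h
      · exact absurd h (hq k).ne'
      · exact h
    exact normSq_eq_zero.1 this
  set v : Fin K → Fin d → ℂ :=
    fun k j => if p j = 0 then 0 else c k j / (Real.sqrt (p j) : ℂ) with hv
  have hvc : ∀ k j, (Real.sqrt (p j) : ℂ) * v k j = c k j := by
    intro k j
    by_cases h : p j = 0
    · simp [hv, h, hsupp j h k]
    · have hps : (0:ℝ) < p j := lt_of_le_of_ne (hp j) (Ne.symm h)
      have hs : (Real.sqrt (p j) : ℂ) ≠ 0 := by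
        simp only [ne_eq, Complex.ofReal_eq_zero]
        exact (Real.sqrt_pos.2 hps).ne'
      simp only [hv, if_neg h]
      field_simp
  have hdecv : ∀ l l', ∑ k, (q k : ℂ) * (v k l * (starRingEnd ℂ) (v k l'))
      = if l = l' ∧ p l ≠ 0 then 1 else 0 := by
    intro l l'
    by_cases hl : p l = 0
    · have hz : ∀ k, (q k : ℂ) * (v k l * (starRingEnd ℂ) (v k l')) = 0 := by
        intro k; simp [hv, hl]
      have hcond : ¬(l = l' ∧ p l ≠ 0) := by
        intro h
        exact h.2 hl
      rw [Finset.sum_congr rfl fun k _ => hz k, Finset.sum_const, smul_zero, if_neg hcond]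
    · by_cases hl' : p l' = 0
      · have hz : ∀ k, (q k : ℂ) * (v k l * (starRingEnd ℂ) (v k l')) = 0 := by
          intro k; simp [hv, hl']
        have hcond : ¬(l = l' ∧ p l ≠ 0) := by
          intro h
          exact hl (h.1 ▸ hl')
        rw [Finset.sum_congr rfl fun k _ => hz k, Finset.sum_const, smul_zero, if_neg hcond]
      · have hsl : (Real.sqrt (p l) : ℂ) ≠ 0 := by
          simp only [ne_eq, Complex.ofReal_eq_zero]
          exact (Real.sqrt_pos.2 (lt_of_le_of_ne (hp l) (Ne.symm hl))).ne'
        have hsl' : (Real.sqrt (p l') : ℂ) ≠ 0 := by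
          simp only [ne_eq, Complex.ofReal_eq_zero]
          exact (Real.sqrt_pos.2 (lt_of_le_of_ne (hp l') (Ne.symm hl'))).ne'
        have hexp : ∀ k, (q k : ℂ) * (v k l * (starRingEnd ℂ) (v k l'))
            = ((q k : ℂ) * (c k l * (starRingEnd ℂ) (c k l')))
              / ((Real.sqrt (p l) : ℂ) * (Real.sqrt (p l') : ℂ)) := by
          intro k
          simp only [hv, if_neg hl, if_neg hl', map_div₀, Complex.conj_ofReal]
          field_simp
        rw [Finset.sum_congr rfl fun k _ => hexp k, ← Finset.sum_div, hdec l l']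
        by_cases hll : l = l'
        · subst hll
          rw [if_pos rfl, if_pos ⟨rfl, hl⟩, ← Complex.ofReal_mul,
            Real.mul_self_sqrt (hp l)]
          exact div_self (by exact_mod_cast hl)
        · have hcond : ¬(l = l' ∧ p l ≠ 0) := by
            intro h
            exact hll h.1
          rw [if_neg hll, if_neg hcond, zero_div]
  set Lv : Fin K → Fin d → ℂ :=
    fun k j => ∑ l, (rr p j l : ℂ) * A j l * v k l with hLv
  set T : Fin K → ℂ :=
    fun k => ∑ j, (starRingEnd ℂ) (c k j) * ((Real.sqrt (p j) : ℂ) * Lv k j) with hT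
  have hsplit : ∀ j l, (Real.sqrt (p j) : ℂ) * (Real.sqrt (p l) : ℂ) * A j l
      = ((p j : ℂ) * ((rr p j l : ℂ) * A j l) + ((rr p j l : ℂ) * A j l) * (p l : ℂ)) / 2 := by
    intro j l
    have h := sqrt_mul_sqrt p hp j l
    have h2 : ((Real.sqrt (p j) * Real.sqrt (p l) : ℝ) : ℂ)
        = (((p j * rr p j l + rr p j l * p l) / 2 : ℝ) : ℂ) := by rw [h]
    push_cast at h2
    calc (Real.sqrt (p j) : ℂ) * (Real.sqrt (p l) : ℂ) * A j l
        = ((Real.sqrt (p j) : ℂ) * (Real.sqrt (p l) : ℂ)) * A j l := by ring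
      _ = (((p j : ℂ) * (rr p j l : ℂ) + (rr p j l : ℂ) * (p l : ℂ)) / 2) * A j l := by rw [h2]
      _ = ((p j : ℂ) * ((rr p j l : ℂ) * A j l) + ((rr p j l : ℂ) * A j l) * (p l : ℂ)) / 2 := by
          ring
  have hcAc : ∀ k, star (c k) ⬝ᵥ (A *ᵥ c k) = ((T k).re : ℂ) := by
    intro k
    have hconjT : (starRingEnd ℂ) (T k)
        = ∑ j, ∑ l, c k j * (Real.sqrt (p j) : ℂ) * (rr p j l : ℂ) * A l j
            * (starRingEnd ℂ) (v k l) := by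
      rw [hT]
      simp only [map_sum]
      refine Finset.sum_congr rfl fun j _ => ?_
      rw [_root_.map_mul, _root_.map_mul, Complex.conj_conj, Complex.conj_ofReal, hLv]
      simp only [map_sum]
      rw [Finset.mul_sum, Finset.mul_sum]
      refine Finset.sum_congr rfl fun l _ => ?_
      rw [_root_.map_mul, _root_.map_mul, Complex.conj_ofReal, hA j l]
      ring
    have hTflat : T k = ∑ j, ∑ l, (starRingEnd ℂ) (c k j) * (Real.sqrt (p j) : ℂ)
        * (rr p j l : ℂ) * A j l * v k l := by
      rw [hT]
      refine Finset.sum_congr rfl fun j _ => ?_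
      rw [hLv]
      rw [Finset.mul_sum, Finset.mul_sum]
      exact Finset.sum_congr rfl fun l _ => by ring
    have hmain : star (c k) ⬝ᵥ (A *ᵥ c k) = (T k + (starRingEnd ℂ) (T k)) / 2 := by
      rw [dot_expand, hconjT, hTflat]
      have hswap : ∑ j, ∑ l, c k j * (Real.sqrt (p j) : ℂ) * (rr p j l : ℂ) * A l j
          * (starRingEnd ℂ) (v k l)
          = ∑ j, ∑ l, c k l * (Real.sqrt (p l) : ℂ) * (rr p j l : ℂ) * A j l
              * (starRingEnd ℂ) (v k j) := by
        rw [Finset.sum_comm]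
        refine Finset.sum_congr rfl fun j _ => Finset.sum_congr rfl fun l _ => ?_
        rw [rr_symm p l j]
      rw [hswap, ← Finset.sum_add_distrib, Finset.sum_div]
      refine Finset.sum_congr rfl fun j _ => ?_
      rw [← Finset.sum_add_distrib, Finset.sum_div]
      refine Finset.sum_congr rfl fun l _ => ?_
      rw [← hvc k j, ← hvc k l, _root_.map_mul, Complex.conj_ofReal]
      linear_combination ((starRingEnd ℂ) (v k j) * v k l) * hsplit j l
        - ((rr p j l : ℂ) * (starRingEnd ℂ) (v k j) * A j l * v k l / 2) * (hsq j + hsq l)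
    rw [hmain, Complex.add_conj]
    push_cast
    ring
  have hCS : ∀ k, ((star (c k) ⬝ᵥ (A *ᵥ c k)).re) ^ 2
      ≤ ∑ j, p j * normSq (Lv k j) := by
    intro k
    have hre : (star (c k) ⬝ᵥ (A *ᵥ c k)).re = (T k).re := by
      rw [hcAc k, Complex.ofReal_re]
    rw [hre]
    have h1 : (T k).re ^ 2 ≤ normSq (T k) := by
      rw [normSq_apply]
      nlinarith [sq_nonneg ((T k).im)]
    have h2 := cs_normSq (c k) (fun j => (Real.sqrt (p j) : ℂ) * Lv k j)
    have hTk : normSq (T k)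
        = normSq (∑ j, (starRingEnd ℂ) (c k j) * ((Real.sqrt (p j) : ℂ) * Lv k j)) := by
      rw [hT]
    rw [hTk] at h1
    refine le_trans h1 (le_trans h2 ?_)
    rw [hunit k, one_mul]
    refine le_of_eq (Finset.sum_congr rfl fun j _ => ?_)
    rw [normSq_mul, normSq_ofReal, Real.mul_self_sqrt (hp j)]
  have hBsum : ∑ k, q k * ∑ j, p j * normSq (Lv k j)
      = ∑ j, ∑ l, p j * (rr p j l ^ 2 * normSq (A j l)) := by
    have hC : ∀ j, ∑ k, q k * normSq (Lv k j) = ∑ l, rr p j l ^ 2 * normSq (A j l) := by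
      intro j
      have hCc : ∑ k, (q k : ℂ) * (Lv k j * (starRingEnd ℂ) (Lv k j))
          = ((∑ l, rr p j l ^ 2 * normSq (A j l) : ℝ) : ℂ) := by
        have hexp : ∀ k, (q k : ℂ) * (Lv k j * (starRingEnd ℂ) (Lv k j))
            = ∑ l, ∑ l', (rr p j l : ℂ) * A j l * ((rr p j l' : ℂ) * (starRingEnd ℂ) (A j l'))
                * ((q k : ℂ) * (v k l * (starRingEnd ℂ) (v k l'))) := by
          intro k
          rw [hLv]
          simp only [map_sum, _root_.map_mul, Complex.conj_ofReal]
          rw [Finset.sum_mul_sum, Finset.mul_sum]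
          refine Finset.sum_congr rfl fun l _ => ?_
          rw [Finset.mul_sum]
          exact Finset.sum_congr rfl fun l' _ => by ring
        rw [Finset.sum_congr rfl fun k _ => hexp k, Finset.sum_comm]
        have hinner : ∀ l, ∑ k, ∑ l', (rr p j l : ℂ) * A j l
            * ((rr p j l' : ℂ) * (starRingEnd ℂ) (A j l'))
            * ((q k : ℂ) * (v k l * (starRingEnd ℂ) (v k l')))
            = ((rr p j l ^ 2 * normSq (A j l) : ℝ) : ℂ) := by
          intro l
          rw [Finset.sum_comm]
          have h4 : ∀ l', ∑ k, (rr p j l : ℂ) * A j l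
              * ((rr p j l' : ℂ) * (starRingEnd ℂ) (A j l'))
              * ((q k : ℂ) * (v k l * (starRingEnd ℂ) (v k l')))
              = if l = l' ∧ p l ≠ 0 then (rr p j l : ℂ) * A j l
                  * ((rr p j l' : ℂ) * (starRingEnd ℂ) (A j l')) else 0 := by
            intro l'
            rw [← Finset.mul_sum, hdecv l l']
            split <;> simp
          rw [Finset.sum_congr rfl fun l' _ => h4 l']
          by_cases hl : p l = 0
          · have : ∀ l', (if l = l' ∧ p l ≠ 0 then (rr p j l : ℂ) * A j l
                * ((rr p j l' : ℂ) * (starRingEnd ℂ) (A j l')) else 0) = 0 := by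
              intro l'
              rw [if_neg (fun h => h.2 hl)]
            rw [Finset.sum_congr rfl fun l' _ => this l', Finset.sum_const, smul_zero,
              rr_zero_right p j l hl]
            norm_num
          · have hcongr : ∀ l', (if l = l' ∧ p l ≠ 0 then (rr p j l : ℂ) * A j l
                * ((rr p j l' : ℂ) * (starRingEnd ℂ) (A j l')) else 0)
                = if l = l' then (rr p j l : ℂ) * A j l
                  * ((rr p j l' : ℂ) * (starRingEnd ℂ) (A j l')) else 0 := by
              intro l'
              by_cases h : l = l'
              · rw [if_pos ⟨h, hl⟩, if_pos h]
              · rw [if_neg (fun hh => h hh.1), if_neg h]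
            rw [Finset.sum_congr rfl fun l' _ => hcongr l', Finset.sum_ite_eq Finset.univ l,
              if_pos (Finset.mem_univ l)]
            calc (rr p j l : ℂ) * A j l * ((rr p j l : ℂ) * (starRingEnd ℂ) (A j l))
                = ((rr p j l : ℂ) * (rr p j l : ℂ)) * (A j l * (starRingEnd ℂ) (A j l)) := by
                  ring
              _ = ((rr p j l ^ 2 * normSq (A j l) : ℝ) : ℂ) := by
                  rw [Complex.mul_conj]
                  push_cast
                  ring
        rw [Finset.sum_congr rfl fun l _ => hinner l, ← Complex.ofReal_sum]
      have hre : ∀ k, (q k : ℂ) * (Lv k j * (starRingEnd ℂ) (Lv k j))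
          = ((q k * normSq (Lv k j) : ℝ) : ℂ) := by
        intro k
        rw [Complex.mul_conj]
        push_cast
        ring
      rw [Finset.sum_congr rfl fun k _ => hre k, ← Complex.ofReal_sum] at hCc
      exact_mod_cast hCc
    calc ∑ k, q k * ∑ j, p j * normSq (Lv k j)
        = ∑ k, ∑ j, p j * (q k * normSq (Lv k j)) := by
          refine Finset.sum_congr rfl fun k _ => ?_
          rw [Finset.mul_sum]
          exact Finset.sum_congr rfl fun j _ => by ring
      _ = ∑ j, ∑ k, p j * (q k * normSq (Lv k j)) := Finset.sum_comm
      _ = ∑ j, p j * ∑ k, q k * normSq (Lv k j) := by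
          refine Finset.sum_congr rfl fun j _ => ?_
          rw [Finset.mul_sum]
      _ = ∑ j, p j * ∑ l, rr p j l ^ 2 * normSq (A j l) := by
          exact Finset.sum_congr rfl fun j _ => by rw [hC j]
      _ = ∑ j, ∑ l, p j * (rr p j l ^ 2 * normSq (A j l)) := by
          exact Finset.sum_congr rfl fun j _ => Finset.mul_sum _ _ _
  have hA2sum : ∑ k, q k * (star (c k) ⬝ᵥ ((A * A) *ᵥ c k)).re
      = ∑ j, ∑ l, p j * normSq (A j l) := by
    have hM : ∀ k, star (c k) ⬝ᵥ ((A * A) *ᵥ c k)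
        = ∑ j, ∑ l, (A * A) j l * (c k l * (starRingEnd ℂ) (c k j)) := by
      intro k
      rw [dot_expand (A * A) (c k)]
      exact Finset.sum_congr rfl fun j _ => Finset.sum_congr rfl fun l _ => by ring
    have hCc : ∑ k, (q k : ℂ) * (star (c k) ⬝ᵥ ((A * A) *ᵥ c k))
        = ((∑ j, ∑ l, p j * normSq (A j l) : ℝ) : ℂ) := by
      have hexp : ∀ k, (q k : ℂ) * (star (c k) ⬝ᵥ ((A * A) *ᵥ c k))
          = ∑ j, ∑ l, (A * A) j l * ((q k : ℂ) * (c k l * (starRingEnd ℂ) (c k j))) := by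
        intro k
        rw [hM k, Finset.mul_sum]
        refine Finset.sum_congr rfl fun j _ => ?_
        rw [Finset.mul_sum]
        exact Finset.sum_congr rfl fun l _ => by ring
      rw [Finset.sum_congr rfl fun k _ => hexp k, Finset.sum_comm]
      have hinner : ∀ j, ∑ k, ∑ l, (A * A) j l * ((q k : ℂ) * (c k l * (starRingEnd ℂ) (c k j)))
          = ((∑ l, p j * normSq (A j l) : ℝ) : ℂ) := by
        intro j
        rw [Finset.sum_comm]
        have h5 : ∀ l, ∑ k, (A * A) j l * ((q k : ℂ) * (c k l * (starRingEnd ℂ) (c k j)))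
            = if l = j then (A * A) j l * (p l : ℂ) else 0 := by
          intro l
          rw [← Finset.mul_sum, hdec l j]
          split <;> simp
        rw [Finset.sum_congr rfl fun l _ => h5 l, Finset.sum_ite_eq' Finset.univ j,
          if_pos (Finset.mem_univ j)]
        rw [Matrix.mul_apply, Finset.sum_mul, Complex.ofReal_sum]
        refine Finset.sum_congr rfl fun a _ => ?_
        calc A j a * A a j * (p j : ℂ) = (p j : ℂ) * (A j a * (starRingEnd ℂ) (A j a)) := by
              rw [hA j a]
              ring
          _ = ((p j * normSq (A j a) : ℝ) : ℂ) := by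
              rw [Complex.mul_conj]
              push_cast
              ring
      rw [Finset.sum_congr rfl fun j _ => hinner j, ← Complex.ofReal_sum]
    have hre : (∑ k, (q k : ℂ) * (star (c k) ⬝ᵥ ((A * A) *ᵥ c k))).re
        = ∑ k, q k * (star (c k) ⬝ᵥ ((A * A) *ᵥ c k)).re := by
      rw [Complex.re_sum]
      exact Finset.sum_congr rfl fun k _ => by
        rw [Complex.mul_re, Complex.ofReal_re, Complex.ofReal_im]
        ring
    rw [← hre, hCc, Complex.ofReal_re]
  -- assembly
  have hvar : ∑ k, q k * varVec A (c k)
      = (∑ k, q k * (star (c k) ⬝ᵥ ((A * A) *ᵥ c k)).re)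
        - ∑ k, q k * ((star (c k) ⬝ᵥ (A *ᵥ c k)).re) ^ 2 := by
    rw [← Finset.sum_sub_distrib]
    exact Finset.sum_congr rfl fun k _ => by
      unfold varVec
      ring
  rw [hvar, hA2sum]
  have hfinal : ∑ k, q k * ((star (c k) ⬝ᵥ (A *ᵥ c k)).re) ^ 2
      ≤ ∑ j, ∑ l, p j * (rr p j l ^ 2 * normSq (A j l)) := by
    rw [← hBsum]
    exact Finset.sum_le_sum fun k _ => mul_le_mul_of_nonneg_left (hCS k) (hq k).le
  have hrw : ∑ j, ∑ l, p j * rr p j l ^ 2 * normSq (A j l)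
      = ∑ j, ∑ l, p j * (rr p j l ^ 2 * normSq (A j l)) :=
    Finset.sum_congr rfl fun j _ => Finset.sum_congr rfl fun l _ => by ring
  rw [hrw]
  exact sub_le_sub_left hfinal _

end QfiAux

namespace QfiAux

open scoped Classical in
lemma regroup {K : ℕ} {E : Type} [AddCommGroup E] [Module ℝ E]
    (q : Fin K → ℝ) (hq0 : ∀ k, 0 ≤ q k) (k0 : Fin K) (hk0 : 0 < q k0)
    (sel : Fin K → Fin K) (q' : Fin K → ℝ) (m : ℕ)
    (hm : m = (Finset.univ.filter (fun k => ¬(0 < q k ∧ k ≠ k0))).card)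
    (hsel1 : ∀ k, (0 < q k ∧ k ≠ k0) → sel k = k ∧ q' k = q k)
    (hsel2 : ∀ k, ¬(0 < q k ∧ k ≠ k0) → sel k = k0 ∧ q' k = q k0 / m)
    (F : Fin K → E) (hF : ∀ k, q k = 0 → F k = 0) :
    ∑ k, (q' k / q (sel k)) • F (sel k) = ∑ k, F k := by
  classical
  have hm0 : 0 < m := by
    rw [hm]
    refine Finset.card_pos.2 ⟨k0, ?_⟩
    simp only [Finset.mem_filter, Finset.mem_univ, true_and]
    intro h
    exact h.2 rfl
  rw [← Finset.sum_filter_add_sum_filter_not Finset.univ (fun k => 0 < q k ∧ k ≠ k0)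
    (fun k => (q' k / q (sel k)) • F (sel k))]
  have h1 : ∑ k ∈ Finset.univ.filter (fun k => 0 < q k ∧ k ≠ k0),
      (q' k / q (sel k)) • F (sel k)
      = ∑ k ∈ Finset.univ.filter (fun k => 0 < q k ∧ k ≠ k0), F k := by
    refine Finset.sum_congr rfl fun k hk => ?_
    rw [Finset.mem_filter] at hk
    obtain ⟨hs, hq'⟩ := hsel1 k hk.2
    rw [hs, hq', div_self hk.2.1.ne', one_smul]
  have h2 : ∑ k ∈ Finset.univ.filter (fun k => ¬(0 < q k ∧ k ≠ k0)),
      (q' k / q (sel k)) • F (sel k) = F k0 := by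
    have hterm : ∀ k ∈ Finset.univ.filter (fun k => ¬(0 < q k ∧ k ≠ k0)),
        (q' k / q (sel k)) • F (sel k) = ((m : ℝ)⁻¹) • F k0 := by
      intro k hk
      rw [Finset.mem_filter] at hk
      obtain ⟨hs, hq'⟩ := hsel2 k hk.2
      rw [hs, hq']
      congr 1
      field_simp
    rw [Finset.sum_congr rfl hterm, Finset.sum_const, ← hm,
      ← Nat.cast_smul_eq_nsmul ℝ, smul_smul, mul_inv_cancel₀ (by exact_mod_cast hm0.ne'),
      one_smul]
  rw [h1, h2]
  -- now the RHS
  have h3 : ∑ k, F k = ∑ k ∈ Finset.univ.filter (fun k => 0 < q k), F k := by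
    rw [← Finset.sum_filter_add_sum_filter_not Finset.univ (fun k => 0 < q k) F]
    have : ∑ k ∈ Finset.univ.filter (fun k => ¬0 < q k), F k = 0 := by
      refine Finset.sum_eq_zero fun k hk => ?_
      rw [Finset.mem_filter] at hk
      exact hF k (le_antisymm (not_lt.1 hk.2) (hq0 k))
    rw [this, add_zero]
  have h4 : (Finset.univ.filter (fun k => 0 < q k)).erase k0
      = Finset.univ.filter (fun k => 0 < q k ∧ k ≠ k0) := by
    ext k
    simp only [Finset.mem_erase, Finset.mem_filter, Finset.mem_univ, true_and]
    tauto
  have hk0mem : k0 ∈ Finset.univ.filter (fun k => 0 < q k) := by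
    simp only [Finset.mem_filter, Finset.mem_univ, true_and]
    exact hk0
  rw [h3, ← Finset.sum_erase_add _ F hk0mem, h4]

end QfiAux

namespace QfiAux

lemma sqrt_split_c {d : ℕ} (p : Fin d → ℝ) (hp : ∀ j, 0 ≤ p j)
    (A : Matrix (Fin d) (Fin d) ℂ) (j l : Fin d) :
    (Real.sqrt (p j) : ℂ) * (Real.sqrt (p l) : ℂ) * A j l
      = ((p j : ℂ) * ((rr p j l : ℂ) * A j l) + ((rr p j l : ℂ) * A j l) * (p l : ℂ)) / 2 := by
  have h := sqrt_mul_sqrt p hp j l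
  have h2 : ((Real.sqrt (p j) * Real.sqrt (p l) : ℝ) : ℂ)
      = (((p j * rr p j l + rr p j l * p l) / 2 : ℝ) : ℂ) := by rw [h]
  push_cast at h2
  calc (Real.sqrt (p j) : ℂ) * (Real.sqrt (p l) : ℂ) * A j l
      = ((Real.sqrt (p j) : ℂ) * (Real.sqrt (p l) : ℂ)) * A j l := by ring
    _ = (((p j : ℂ) * (rr p j l : ℂ) + (rr p j l : ℂ) * (p l : ℂ)) / 2) * A j l := by rw [h2]
    _ = ((p j : ℂ) * ((rr p j l : ℂ) * A j l) + ((rr p j l : ℂ) * A j l) * (p l : ℂ)) / 2 := by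
        ring

lemma scale_dot {d : ℕ} (M : Matrix (Fin d) (Fin d) ℂ) (s : ℝ) (x : Fin d → ℂ) :
    star (fun j => (s : ℂ) * x j) ⬝ᵥ (M *ᵥ (fun j => (s : ℂ) * x j))
      = ((s * s : ℝ) : ℂ) * (star x ⬝ᵥ (M *ᵥ x)) := by
  rw [dot_expand, dot_expand, Finset.mul_sum]
  refine Finset.sum_congr rfl fun j _ => ?_
  rw [Finset.mul_sum]
  refine Finset.sum_congr rfl fun l _ => ?_
  rw [_root_.map_mul, Complex.conj_ofReal]
  push_cast
  ring

lemma core_exists {d : ℕ} (p : Fin d → ℝ) (hp : ∀ j, 0 ≤ p j) (hp1 : ∑ j, p j = 1)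
    (A : Matrix (Fin d) (Fin d) ℂ) (hA : ∀ j l, (starRingEnd ℂ) (A j l) = A l j) :
    ∃ (K : ℕ) (q : Fin K → ℝ) (c : Fin K → Fin d → ℂ),
      0 < K ∧ (∀ k, 0 < q k) ∧ ∑ k, q k = 1 ∧
      (∀ k, star (c k) ⬝ᵥ c k = 1) ∧
      (∀ j l, ∑ k, (q k : ℂ) * (c k j * (starRingEnd ℂ) (c k l))
        = if j = l then (p j : ℂ) else 0) ∧
      ∑ k, q k * varVec A (c k)
        = (∑ j, ∑ l, p j * normSq (A j l)) - ∑ j, ∑ l, p j * (rr p j l ^ 2 * normSq (A j l)) := by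
  classical
  have hd : 0 < d := by
    by_contra h
    have hd0 : d = 0 := by omega
    subst hd0
    simp at hp1
  -- the matrix L and its eigendecomposition
  set L : Matrix (Fin d) (Fin d) ℂ := Matrix.of (fun j l => (rr p j l : ℂ) * A j l) with hLdef
  have hLH : L.IsHermitian := by
    ext i j
    rw [conjTranspose_apply]
    show star ((rr p j i : ℂ) * A j i) = (rr p i j : ℂ) * A i j
    simp only [star_mul', RCLike.star_def]
    rw [Complex.conj_ofReal, hA j i, rr_symm p i j]
  set u : Fin d → Fin d → ℂ := fun k => ⇑(hLH.eigenvectorBasis k) with hu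
  set lam : Fin d → ℝ := hLH.eigenvalues with hlam
  have hLu : ∀ k j, ∑ l, (rr p j l : ℂ) * A j l * u k l = (lam k : ℂ) * u k j := by
    intro k j
    have h2 := congrFun (hLH.mulVec_eigenvectorBasis k) j
    simp only [mulVec, dotProduct, Pi.smul_apply, Complex.real_smul] at h2
    exact h2
  have horth : ∀ k k', ∑ a, (starRingEnd ℂ) (u k a) * u k' a
      = if k = k' then 1 else 0 := by
    intro k k'
    have h := hLH.eigenvectorBasis.orthonormal
    rw [orthonormal_iff_ite] at h
    have h2 := h k k'
    rw [PiLp.inner_apply] at h2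
    simp only [RCLike.inner_apply'] at h2
    exact h2
  have hcomp : ∀ a b, ∑ k, u k a * (starRingEnd ℂ) (u k b) = if a = b then 1 else 0 := by
    set V : Matrix (Fin d) (Fin d) ℂ := Matrix.of (fun a k => u k a) with hV
    have hVV : Vᴴ * V = 1 := by
      ext k k'
      rw [Matrix.mul_apply, Matrix.one_apply]
      rw [← horth k k']
      refine Finset.sum_congr rfl fun a _ => ?_
      rw [conjTranspose_apply, hV]
      rfl
    have hVV' : V * Vᴴ = 1 := mul_eq_one_comm.1 hVV
    intro a b
    have h := congrFun (congrFun hVV' a) b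
    rw [Matrix.mul_apply] at h
    have h2 : ∑ k, u k a * (starRingEnd ℂ) (u k b) = ∑ k, V a k * Vᴴ k b := by
      refine Finset.sum_congr rfl fun k _ => ?_
      rw [conjTranspose_apply, hV]
      rfl
    rw [h2, h]
    rw [Matrix.one_apply]
  have hcompconj : ∀ a b, ∑ k, (starRingEnd ℂ) (u k a) * u k b
      = if a = b then 1 else 0 := by
    intro a b
    have h := congrArg (starRingEnd ℂ) (hcomp a b)
    rw [map_sum] at h
    have h2 : ∀ k, (starRingEnd ℂ) (u k a * (starRingEnd ℂ) (u k b))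
        = (starRingEnd ℂ) (u k a) * u k b := by
      intro k
      rw [_root_.map_mul, Complex.conj_conj]
    rw [Finset.sum_congr rfl fun k _ => h2 k] at h
    rw [h]
    split <;> simp
  -- the weights
  set q : Fin d → ℝ := fun k => ∑ j, p j * normSq (u k j) with hqdef
  have hq0 : ∀ k, 0 ≤ q k := fun k =>
    Finset.sum_nonneg fun j _ => mul_nonneg (hp j) (normSq_nonneg _)
  have hone : ∀ j, ∑ k, normSq (u k j) = 1 := by
    intro j
    have h := hcomp j j
    rw [if_pos rfl] at h
    rw [Finset.sum_congr rfl fun k _ => Complex.mul_conj (u k j), ← Complex.ofReal_sum] at h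
    exact_mod_cast h
  have hqsum : ∑ k, q k = 1 := by
    calc ∑ k, q k = ∑ k, ∑ j, p j * normSq (u k j) := rfl
      _ = ∑ j, ∑ k, p j * normSq (u k j) := Finset.sum_comm
      _ = ∑ j, p j * ∑ k, normSq (u k j) := by
          exact Finset.sum_congr rfl fun j _ => (Finset.mul_sum _ _ _).symm
      _ = ∑ j, p j := by
          refine Finset.sum_congr rfl fun j _ => ?_
          rw [hone j, mul_one]
      _ = 1 := hp1
  -- the unnormalized vectors
  set ψ : Fin d → Fin d → ℂ := fun k j => (Real.sqrt (p j) : ℂ) * u k j with hψdef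
  have hψq : ∀ k, ∑ j, normSq (ψ k j) = q k := by
    intro k
    refine Finset.sum_congr rfl fun j _ => ?_
    show normSq ((Real.sqrt (p j) : ℂ) * u k j) = _
    rw [normSq_mul, normSq_ofReal, Real.mul_self_sqrt (hp j)]
  have hψ0 : ∀ k, q k = 0 → ∀ j, ψ k j = 0 := by
    intro k hk j
    have h0 : p j * normSq (u k j) = 0 :=
      (Finset.sum_eq_zero_iff_of_nonneg (fun j _ =>
        mul_nonneg (hp j) (normSq_nonneg _))).1 hk j (Finset.mem_univ j)
    rcases mul_eq_zero.1 h0 with h | h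
    · show (Real.sqrt (p j) : ℂ) * u k j = 0
      rw [h, Real.sqrt_zero]
      simp
    · show (Real.sqrt (p j) : ℂ) * u k j = 0
      rw [normSq_eq_zero.1 h, mul_zero]
  -- choose k0
  have hex : ∃ k, 0 < q k := by
    by_contra h
    push_neg at h
    have hz : ∀ k, q k = 0 := fun k => le_antisymm (h k) (hq0 k)
    rw [Finset.sum_congr rfl fun k _ => hz k, Finset.sum_const, smul_zero] at hqsum
    exact one_ne_zero hqsum.symm
  obtain ⟨k0, hk0⟩ := hex
  set m : ℕ := (Finset.univ.filter (fun k => ¬(0 < q k ∧ k ≠ k0))).card with hm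
  have hm0 : 0 < m := by
    rw [hm]
    refine Finset.card_pos.2 ⟨k0, ?_⟩
    simp only [Finset.mem_filter, Finset.mem_univ, true_and]
    intro h
    exact h.2 rfl
  set sel : Fin d → Fin d := fun k => if 0 < q k ∧ k ≠ k0 then k else k0 with hseldef
  set q' : Fin d → ℝ := fun k => if 0 < q k ∧ k ≠ k0 then q k else q k0 / m with hq'def
  have hsel1 : ∀ k, (0 < q k ∧ k ≠ k0) → sel k = k ∧ q' k = q k := by
    intro k h
    constructor
    · show (if 0 < q k ∧ k ≠ k0 then k else k0) = k
      rw [if_pos h]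
    · show (if 0 < q k ∧ k ≠ k0 then q k else q k0 / m) = q k
      rw [if_pos h]
  have hsel2 : ∀ k, ¬(0 < q k ∧ k ≠ k0) → sel k = k0 ∧ q' k = q k0 / m := by
    intro k h
    constructor
    · show (if 0 < q k ∧ k ≠ k0 then k else k0) = k0
      rw [if_neg h]
    · show (if 0 < q k ∧ k ≠ k0 then q k else q k0 / m) = q k0 / m
      rw [if_neg h]
  have hqsel : ∀ k, 0 < q (sel k) := by
    intro k
    by_cases h : 0 < q k ∧ k ≠ k0
    · rw [(hsel1 k h).1]
      exact h.1
    · rw [(hsel2 k h).1]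
      exact hk0
  have hq'pos : ∀ k, 0 < q' k := by
    intro k
    by_cases h : 0 < q k ∧ k ≠ k0
    · rw [(hsel1 k h).2]
      exact h.1
    · rw [(hsel2 k h).2]
      exact div_pos hk0 (by exact_mod_cast hm0)
  set c : Fin d → Fin d → ℂ :=
    fun k j => (((Real.sqrt (q (sel k)))⁻¹ : ℝ) : ℂ) * ψ (sel k) j with hcdef
  have hsq0 : ∀ k, Real.sqrt (q (sel k)) ≠ 0 := fun k => (Real.sqrt_pos.2 (hqsel k)).ne'
  have hinv : ∀ k, (((Real.sqrt (q (sel k)))⁻¹ : ℝ) : ℂ) * (((Real.sqrt (q (sel k)))⁻¹ : ℝ) : ℂ)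
      = (((q (sel k))⁻¹ : ℝ) : ℂ) := by
    intro k
    rw [← Complex.ofReal_mul, ← mul_inv, Real.mul_self_sqrt (hqsel k).le]
  refine ⟨d, q', c, hd, hq'pos, ?_, ?_, ?_, ?_⟩
  · -- sum of weights
    have hr := regroup (E := ℝ) q hq0 k0 hk0 sel q' m hm hsel1 hsel2 q (fun k hk => hk)
    calc ∑ k, q' k = ∑ k, (q' k / q (sel k)) • q (sel k) := by
          refine Finset.sum_congr rfl fun k _ => ?_
          rw [smul_eq_mul, div_mul_cancel₀ _ (hqsel k).ne']
      _ = ∑ k, q k := hr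
      _ = 1 := hqsum
  · -- unit vectors
    intro k
    have h1 : star (c k) ⬝ᵥ c k = ((∑ j, normSq (c k j) : ℝ) : ℂ) := by
      rw [dotProduct, Complex.ofReal_sum]
      refine Finset.sum_congr rfl fun j _ => ?_
      rw [Pi.star_apply, RCLike.star_def, mul_comm, Complex.mul_conj]
    rw [h1]
    have h2 : ∑ j, normSq (c k j) = (Real.sqrt (q (sel k)))⁻¹ * (Real.sqrt (q (sel k)))⁻¹
        * q (sel k) := by
      have h2a : ∀ j, normSq (c k j)
          = (Real.sqrt (q (sel k)))⁻¹ * (Real.sqrt (q (sel k)))⁻¹ * normSq (ψ (sel k) j) := by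
        intro j
        show normSq ((((Real.sqrt (q (sel k)))⁻¹ : ℝ) : ℂ) * ψ (sel k) j) = _
        rw [normSq_mul, normSq_ofReal]
      rw [Finset.sum_congr rfl fun j _ => h2a j, ← Finset.mul_sum, hψq]
    rw [h2, ← mul_inv, Real.mul_self_sqrt (hqsel k).le,
      inv_mul_cancel₀ (hqsel k).ne', Complex.ofReal_one]
  · -- decomposition
    intro j l
    have hterm : ∀ k, (q' k : ℂ) * (c k j * (starRingEnd ℂ) (c k l))
        = (q' k / q (sel k)) • (ψ (sel k) j * (starRingEnd ℂ) (ψ (sel k) l)) := by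
      intro k
      rw [Complex.real_smul]
      show (q' k : ℂ) * (((((Real.sqrt (q (sel k)))⁻¹ : ℝ) : ℂ) * ψ (sel k) j)
          * (starRingEnd ℂ) ((((Real.sqrt (q (sel k)))⁻¹ : ℝ) : ℂ) * ψ (sel k) l)) = _
      rw [_root_.map_mul, Complex.conj_ofReal]
      calc (q' k : ℂ) * (((((Real.sqrt (q (sel k)))⁻¹ : ℝ) : ℂ) * ψ (sel k) j)
            * ((((Real.sqrt (q (sel k)))⁻¹ : ℝ) : ℂ) * (starRingEnd ℂ) (ψ (sel k) l)))
          = (q' k : ℂ) * (((((Real.sqrt (q (sel k)))⁻¹ : ℝ) : ℂ)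
              * (((Real.sqrt (q (sel k)))⁻¹ : ℝ) : ℂ))
              * (ψ (sel k) j * (starRingEnd ℂ) (ψ (sel k) l))) := by ring
        _ = (q' k : ℂ) * ((((q (sel k))⁻¹ : ℝ) : ℂ)
              * (ψ (sel k) j * (starRingEnd ℂ) (ψ (sel k) l))) := by rw [hinv k]
        _ = ((q' k / q (sel k) : ℝ) : ℂ) * (ψ (sel k) j * (starRingEnd ℂ) (ψ (sel k) l)) := by
              push_cast
              ring
    have hF0 : ∀ k, q k = 0 → (fun k => ψ k j * (starRingEnd ℂ) (ψ k l)) k = 0 := by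
      intro k hk
      show ψ k j * (starRingEnd ℂ) (ψ k l) = 0
      rw [hψ0 k hk j, zero_mul]
    have hr := regroup (E := ℂ) q hq0 k0 hk0 sel q' m hm hsel1 hsel2
      (fun k => ψ k j * (starRingEnd ℂ) (ψ k l)) hF0
    rw [Finset.sum_congr rfl fun k _ => hterm k, hr]
    have hsum : ∑ k, ψ k j * (starRingEnd ℂ) (ψ k l)
        = (Real.sqrt (p j) : ℂ) * (Real.sqrt (p l) : ℂ) * (if j = l then 1 else 0) := by
      rw [← hcomp j l, Finset.mul_sum]
      refine Finset.sum_congr rfl fun k _ => ?_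
      show (Real.sqrt (p j) : ℂ) * u k j * (starRingEnd ℂ) ((Real.sqrt (p l) : ℂ) * u k l) = _
      rw [_root_.map_mul, Complex.conj_ofReal]
      ring
    rw [hsum]
    by_cases hjl : j = l
    · subst hjl
      rw [if_pos rfl, if_pos rfl, mul_one, ← Complex.ofReal_mul, Real.mul_self_sqrt (hp j)]
    · rw [if_neg hjl, if_neg hjl, mul_zero]
  · -- the value
    have hψA : ∀ k, star (ψ k) ⬝ᵥ (A *ᵥ ψ k) = ((lam k * q k : ℝ) : ℂ) := by
      intro k
      have hinner2 : ∀ l, ∑ j, (starRingEnd ℂ) (u k j) * ((rr p j l : ℂ) * A j l)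
          = (lam k : ℂ) * (starRingEnd ℂ) (u k l) := by
        intro l
        calc ∑ j, (starRingEnd ℂ) (u k j) * ((rr p j l : ℂ) * A j l)
            = ∑ j, (starRingEnd ℂ) ((rr p l j : ℂ) * A l j * u k j) := by
              refine Finset.sum_congr rfl fun j _ => ?_
              rw [_root_.map_mul, _root_.map_mul, Complex.conj_ofReal, hA l j, rr_symm p j l]
              ring
          _ = (starRingEnd ℂ) (∑ j, (rr p l j : ℂ) * A l j * u k j) := by rw [map_sum]
          _ = (starRingEnd ℂ) ((lam k : ℂ) * u k l) := by rw [hLu k l]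
          _ = (lam k : ℂ) * (starRingEnd ℂ) (u k l) := by
              rw [_root_.map_mul, Complex.conj_ofReal]
      have hqc : ∑ j, (p j : ℂ) * ((starRingEnd ℂ) (u k j) * u k j) = ((q k : ℝ) : ℂ) := by
        have hterm : ∀ j, (p j : ℂ) * ((starRingEnd ℂ) (u k j) * u k j)
            = ((p j * normSq (u k j) : ℝ) : ℂ) := by
          intro j
          rw [mul_comm ((starRingEnd ℂ) (u k j)), Complex.mul_conj]
          push_cast
          ring
        rw [Finset.sum_congr rfl fun j _ => hterm j, ← Complex.ofReal_sum]
      have h2v : 2 * (star (ψ k) ⬝ᵥ (A *ᵥ ψ k)) = 2 * ((lam k * q k : ℝ) : ℂ) := by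
        rw [dot_expand]
        calc 2 * ∑ j, ∑ l, (starRingEnd ℂ) (ψ k j) * A j l * ψ k l
            = ∑ j, ∑ l, ((p j : ℂ) * ((starRingEnd ℂ) (u k j)
                  * ((rr p j l : ℂ) * A j l * u k l))
                + (p l : ℂ) * (u k l * ((starRingEnd ℂ) (u k j) * ((rr p j l : ℂ) * A j l)))) := by
              rw [Finset.mul_sum]
              refine Finset.sum_congr rfl fun j _ => ?_
              rw [Finset.mul_sum]
              refine Finset.sum_congr rfl fun l _ => ?_
              show 2 * ((starRingEnd ℂ) ((Real.sqrt (p j) : ℂ) * u k j) * A j l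
                  * ((Real.sqrt (p l) : ℂ) * u k l)) = _
              rw [_root_.map_mul, Complex.conj_ofReal]
              linear_combination (2 * (starRingEnd ℂ) (u k j) * u k l) * sqrt_split_c p hp A j l
          _ = (∑ j, ∑ l, (p j : ℂ) * ((starRingEnd ℂ) (u k j)
                  * ((rr p j l : ℂ) * A j l * u k l)))
              + ∑ j, ∑ l, (p l : ℂ) * (u k l * ((starRingEnd ℂ) (u k j)
                  * ((rr p j l : ℂ) * A j l))) := by
              rw [← Finset.sum_add_distrib]
              exact Finset.sum_congr rfl fun j _ => Finset.sum_add_distrib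
          _ = ((lam k * q k : ℝ) : ℂ) + ((lam k * q k : ℝ) : ℂ) := by
              congr 1
              · calc ∑ j, ∑ l, (p j : ℂ) * ((starRingEnd ℂ) (u k j)
                      * ((rr p j l : ℂ) * A j l * u k l))
                    = ∑ j, (p j : ℂ) * ((starRingEnd ℂ) (u k j)
                        * ∑ l, (rr p j l : ℂ) * A j l * u k l) := by
                      refine Finset.sum_congr rfl fun j _ => ?_
                      rw [Finset.mul_sum, Finset.mul_sum]
                  _ = ∑ j, (p j : ℂ) * ((starRingEnd ℂ) (u k j) * ((lam k : ℂ) * u k j)) := by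
                      refine Finset.sum_congr rfl fun j _ => ?_
                      rw [hLu k j]
                  _ = (lam k : ℂ) * ∑ j, (p j : ℂ) * ((starRingEnd ℂ) (u k j) * u k j) := by
                      rw [Finset.mul_sum]
                      exact Finset.sum_congr rfl fun j _ => by ring
                  _ = ((lam k * q k : ℝ) : ℂ) := by
                      rw [hqc]
                      push_cast
                      ring
              · calc ∑ j, ∑ l, (p l : ℂ) * (u k l * ((starRingEnd ℂ) (u k j)
                      * ((rr p j l : ℂ) * A j l)))
                    = ∑ l, ∑ j, (p l : ℂ) * (u k l * ((starRingEnd ℂ) (u k j)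
                        * ((rr p j l : ℂ) * A j l))) := Finset.sum_comm
                  _ = ∑ l, (p l : ℂ) * (u k l
                        * ∑ j, (starRingEnd ℂ) (u k j) * ((rr p j l : ℂ) * A j l)) := by
                      refine Finset.sum_congr rfl fun l _ => ?_
                      rw [Finset.mul_sum, Finset.mul_sum]
                  _ = ∑ l, (p l : ℂ) * (u k l * ((lam k : ℂ) * (starRingEnd ℂ) (u k l))) := by
                      refine Finset.sum_congr rfl fun l _ => ?_
                      rw [hinner2 l]
                  _ = (lam k : ℂ) * ∑ l, (p l : ℂ) * ((starRingEnd ℂ) (u k l) * u k l) := by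
                      rw [Finset.mul_sum]
                      exact Finset.sum_congr rfl fun l _ => by ring
                  _ = ((lam k * q k : ℝ) : ℂ) := by
                      rw [hqc]
                      push_cast
                      ring
          _ = 2 * ((lam k * q k : ℝ) : ℂ) := by ring
      exact mul_left_cancel₀ two_ne_zero h2v
    have hψA2 : ∑ k, (star (ψ k) ⬝ᵥ ((A * A) *ᵥ ψ k))
        = ((∑ j, ∑ l, p j * normSq (A j l) : ℝ) : ℂ) := by
      have hM : ∀ k, star (ψ k) ⬝ᵥ ((A * A) *ᵥ ψ k)
          = ∑ a, ∑ b, (A * A) a b * ((starRingEnd ℂ) (ψ k a) * ψ k b) := by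
        intro k
        rw [dot_expand]
        exact Finset.sum_congr rfl fun a _ => Finset.sum_congr rfl fun b _ => by ring
      rw [Finset.sum_congr rfl fun k _ => hM k, Finset.sum_comm]
      have hinner : ∀ a, ∑ k, ∑ b, (A * A) a b * ((starRingEnd ℂ) (ψ k a) * ψ k b)
          = ((∑ l, p a * normSq (A a l) : ℝ) : ℂ) := by
        intro a
        rw [Finset.sum_comm]
        have h5 : ∀ b, ∑ k, (A * A) a b * ((starRingEnd ℂ) (ψ k a) * ψ k b)
            = if a = b then (A * A) a b * (p a : ℂ) else 0 := by
          intro b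
          have hterm : ∀ k, (starRingEnd ℂ) (ψ k a) * ψ k b
              = (Real.sqrt (p a) : ℂ) * (Real.sqrt (p b) : ℂ)
                * ((starRingEnd ℂ) (u k a) * u k b) := by
            intro k
            show (starRingEnd ℂ) ((Real.sqrt (p a) : ℂ) * u k a)
                * ((Real.sqrt (p b) : ℂ) * u k b) = _
            rw [_root_.map_mul, Complex.conj_ofReal]
            ring
          calc ∑ k, (A * A) a b * ((starRingEnd ℂ) (ψ k a) * ψ k b)
              = (A * A) a b * ((Real.sqrt (p a) : ℂ) * (Real.sqrt (p b) : ℂ))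
                  * ∑ k, (starRingEnd ℂ) (u k a) * u k b := by
                rw [Finset.mul_sum]
                refine Finset.sum_congr rfl fun k _ => ?_
                rw [hterm k]
                ring
            _ = (A * A) a b * ((Real.sqrt (p a) : ℂ) * (Real.sqrt (p b) : ℂ))
                  * (if a = b then 1 else 0) := by rw [hcompconj a b]
            _ = if a = b then (A * A) a b * (p a : ℂ) else 0 := by
                by_cases hab : a = b
                · subst hab
                  rw [if_pos rfl, if_pos rfl, mul_one, ← Complex.ofReal_mul,
                    Real.mul_self_sqrt (hp a)]
                · rw [if_neg hab, if_neg hab, mul_zero]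
        rw [Finset.sum_congr rfl fun b _ => h5 b, Finset.sum_ite_eq Finset.univ a,
          if_pos (Finset.mem_univ a)]
        rw [Matrix.mul_apply, Finset.sum_mul, Complex.ofReal_sum]
        refine Finset.sum_congr rfl fun l _ => ?_
        calc A a l * A l a * (p a : ℂ)
            = (p a : ℂ) * (A a l * (starRingEnd ℂ) (A a l)) := by
              rw [hA a l]
              ring
          _ = ((p a * normSq (A a l) : ℝ) : ℂ) := by
              rw [Complex.mul_conj]
              push_cast
              ring
      rw [Finset.sum_congr rfl fun a _ => hinner a, ← Complex.ofReal_sum]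
    have hlam2 : ∑ k, lam k ^ 2 * q k = ∑ j, ∑ l, p j * (rr p j l ^ 2 * normSq (A j l)) := by
      have hCc : ∀ j, ∑ k, ((lam k : ℂ) * u k j) * (starRingEnd ℂ) ((lam k : ℂ) * u k j)
          = ((∑ l, rr p j l ^ 2 * normSq (A j l) : ℝ) : ℂ) := by
        intro j
        have hexp : ∀ k, ((lam k : ℂ) * u k j) * (starRingEnd ℂ) ((lam k : ℂ) * u k j)
            = ∑ l, ∑ l', (rr p j l : ℂ) * A j l * ((rr p j l' : ℂ) * (starRingEnd ℂ) (A j l'))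
                * (u k l * (starRingEnd ℂ) (u k l')) := by
          intro k
          rw [← hLu k j]
          calc (∑ l, (rr p j l : ℂ) * A j l * u k l)
              * (starRingEnd ℂ) (∑ l', (rr p j l' : ℂ) * A j l' * u k l')
              = (∑ l, (rr p j l : ℂ) * A j l * u k l)
                * (∑ l', (rr p j l' : ℂ) * (starRingEnd ℂ) (A j l')
                    * (starRingEnd ℂ) (u k l')) := by
                congr 1
                rw [map_sum]
                refine Finset.sum_congr rfl fun l' _ => ?_
                rw [_root_.map_mul, _root_.map_mul, Complex.conj_ofReal]
            _ = ∑ l, ∑ l', (rr p j l : ℂ) * A j l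
                  * ((rr p j l' : ℂ) * (starRingEnd ℂ) (A j l'))
                  * (u k l * (starRingEnd ℂ) (u k l')) := by
                rw [Finset.sum_mul_sum]
                exact Finset.sum_congr rfl fun l _ =>
                  Finset.sum_congr rfl fun l' _ => by ring
        rw [Finset.sum_congr rfl fun k _ => hexp k, Finset.sum_comm]
        have hinner : ∀ l, ∑ k, ∑ l', (rr p j l : ℂ) * A j l
            * ((rr p j l' : ℂ) * (starRingEnd ℂ) (A j l'))
            * (u k l * (starRingEnd ℂ) (u k l'))
            = ((rr p j l ^ 2 * normSq (A j l) : ℝ) : ℂ) := by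
          intro l
          rw [Finset.sum_comm]
          have h4 : ∀ l', ∑ k, (rr p j l : ℂ) * A j l
              * ((rr p j l' : ℂ) * (starRingEnd ℂ) (A j l'))
              * (u k l * (starRingEnd ℂ) (u k l'))
              = if l = l' then (rr p j l : ℂ) * A j l
                  * ((rr p j l' : ℂ) * (starRingEnd ℂ) (A j l')) else 0 := by
            intro l'
            rw [← Finset.mul_sum, hcomp l l']
            split <;> simp
          rw [Finset.sum_congr rfl fun l' _ => h4 l', Finset.sum_ite_eq Finset.univ l,
            if_pos (Finset.mem_univ l)]
          calc (rr p j l : ℂ) * A j l * ((rr p j l : ℂ) * (starRingEnd ℂ) (A j l))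
              = ((rr p j l : ℂ) * (rr p j l : ℂ)) * (A j l * (starRingEnd ℂ) (A j l)) := by
                ring
            _ = ((rr p j l ^ 2 * normSq (A j l) : ℝ) : ℂ) := by
                rw [Complex.mul_conj]
                push_cast
                ring
        rw [Finset.sum_congr rfl fun l _ => hinner l, ← Complex.ofReal_sum]
      have hreal : ∀ j, ∑ k, lam k ^ 2 * normSq (u k j)
          = ∑ l, rr p j l ^ 2 * normSq (A j l) := by
        intro j
        have h := hCc j
        have h2 : ∀ k, ((lam k : ℂ) * u k j) * (starRingEnd ℂ) ((lam k : ℂ) * u k j)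
            = ((lam k ^ 2 * normSq (u k j) : ℝ) : ℂ) := by
          intro k
          rw [Complex.mul_conj, normSq_mul, normSq_ofReal]
          push_cast
          ring
        rw [Finset.sum_congr rfl fun k _ => h2 k, ← Complex.ofReal_sum] at h
        exact_mod_cast h
      calc ∑ k, lam k ^ 2 * q k
          = ∑ k, ∑ j, p j * (lam k ^ 2 * normSq (u k j)) := by
            refine Finset.sum_congr rfl fun k _ => ?_
            show lam k ^ 2 * (∑ j, p j * normSq (u k j)) = _
            rw [Finset.mul_sum]
            exact Finset.sum_congr rfl fun j _ => by ring
        _ = ∑ j, ∑ k, p j * (lam k ^ 2 * normSq (u k j)) := Finset.sum_comm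
        _ = ∑ j, p j * ∑ k, lam k ^ 2 * normSq (u k j) := by
            exact Finset.sum_congr rfl fun j _ => (Finset.mul_sum _ _ _).symm
        _ = ∑ j, p j * ∑ l, rr p j l ^ 2 * normSq (A j l) := by
            exact Finset.sum_congr rfl fun j _ => by rw [hreal j]
        _ = ∑ j, ∑ l, p j * (rr p j l ^ 2 * normSq (A j l)) := by
            exact Finset.sum_congr rfl fun j _ => Finset.mul_sum _ _ _
    have hvarc : ∀ k, q' k * varVec A (c k)
        = (q' k / q (sel k))
          • ((star (ψ (sel k)) ⬝ᵥ ((A * A) *ᵥ ψ (sel k))).re - lam (sel k) ^ 2 * q (sel k)) := by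
      intro k
      rw [smul_eq_mul]
      have hcfun : c k = fun j => (((Real.sqrt (q (sel k)))⁻¹ : ℝ) : ℂ) * ψ (sel k) j := rfl
      have hs2 : ((Real.sqrt (q (sel k)))⁻¹ * (Real.sqrt (q (sel k)))⁻¹ : ℝ)
          = (q (sel k))⁻¹ := by
        rw [← mul_inv, Real.mul_self_sqrt (hqsel k).le]
      have hd2 : star (c k) ⬝ᵥ ((A * A) *ᵥ c k)
          = (((q (sel k))⁻¹ : ℝ) : ℂ) * (star (ψ (sel k)) ⬝ᵥ ((A * A) *ᵥ ψ (sel k))) := by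
        rw [hcfun, scale_dot, hs2]
      have hd1 : star (c k) ⬝ᵥ (A *ᵥ c k)
          = (((q (sel k))⁻¹ * (lam (sel k) * q (sel k)) : ℝ) : ℂ) := by
        rw [hcfun, scale_dot, hs2, hψA (sel k), ← Complex.ofReal_mul]
      unfold varVec
      rw [hd1, hd2, Complex.ofReal_re]
      have hre2 : ((((q (sel k))⁻¹ : ℝ) : ℂ)
          * (star (ψ (sel k)) ⬝ᵥ ((A * A) *ᵥ ψ (sel k)))).re
          = (q (sel k))⁻¹ * (star (ψ (sel k)) ⬝ᵥ ((A * A) *ᵥ ψ (sel k))).re := by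
        rw [Complex.mul_re, Complex.ofReal_re, Complex.ofReal_im]
        ring
      rw [hre2]
      have hqs := (hqsel k).ne'
      field_simp
      try ring
      try exact Or.inl trivial
    have hF0 : ∀ k, q k = 0
        → ((star (ψ k) ⬝ᵥ ((A * A) *ᵥ ψ k)).re - lam k ^ 2 * q k) = 0 := by
      intro k hk
      have hzero : ∀ j, ψ k j = 0 := hψ0 k hk
      have hdot : star (ψ k) ⬝ᵥ ((A * A) *ᵥ ψ k) = 0 := by
        rw [dot_expand]
        refine Finset.sum_eq_zero fun a _ => Finset.sum_eq_zero fun b _ => ?_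
        rw [hzero b, mul_zero]
      rw [hdot, hk]
      simp
    have hr := regroup (E := ℝ) q hq0 k0 hk0 sel q' m hm hsel1 hsel2
      (fun k => (star (ψ k) ⬝ᵥ ((A * A) *ᵥ ψ k)).re - lam k ^ 2 * q k) hF0
    calc ∑ k, q' k * varVec A (c k)
        = ∑ k, (q' k / q (sel k))
            • ((star (ψ (sel k)) ⬝ᵥ ((A * A) *ᵥ ψ (sel k))).re
              - lam (sel k) ^ 2 * q (sel k)) :=
          Finset.sum_congr rfl fun k _ => hvarc k
      _ = ∑ k, ((star (ψ k) ⬝ᵥ ((A * A) *ᵥ ψ k)).re - lam k ^ 2 * q k) := hr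
      _ = (∑ k, (star (ψ k) ⬝ᵥ ((A * A) *ᵥ ψ k)).re) - ∑ k, lam k ^ 2 * q k :=
          Finset.sum_sub_distrib _ _
      _ = (∑ j, ∑ l, p j * normSq (A j l))
          - ∑ j, ∑ l, p j * (rr p j l ^ 2 * normSq (A j l)) := by
          rw [hlam2]
          congr 1
          rw [← Complex.re_sum, hψA2, Complex.ofReal_re]

end QfiAux

namespace QfiAux

lemma dot_conj_transform {d : ℕ} (U M : Matrix (Fin d) (Fin d) ℂ) (x y : Fin d → ℂ) :
    star (Uᴴ *ᵥ x) ⬝ᵥ (M *ᵥ (Uᴴ *ᵥ y)) = star x ⬝ᵥ ((U * M * Uᴴ) *ᵥ y) := by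
  rw [star_mulVec, conjTranspose_conjTranspose, mulVec_mulVec, dotProduct_mulVec,
    vecMul_vecMul, dotProduct_mulVec, Matrix.mul_assoc]

lemma conj_vecMulVec {d : ℕ} (U : Matrix (Fin d) (Fin d) ℂ) (x : Fin d → ℂ) (j l : Fin d) :
    (Uᴴ * vecMulVec x (star x) * U) j l
      = (Uᴴ *ᵥ x) j * (starRingEnd ℂ) ((Uᴴ *ᵥ x) l) := by
  rw [Matrix.mul_apply]
  have h1 : ∀ b, (Uᴴ * vecMulVec x (star x)) j b
      = (Uᴴ *ᵥ x) j * (starRingEnd ℂ) (x b) := by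
    intro b
    rw [Matrix.mul_apply]
    calc ∑ a, Uᴴ j a * vecMulVec x (star x) a b
        = ∑ a, (Uᴴ j a * x a) * (starRingEnd ℂ) (x b) := by
          refine Finset.sum_congr rfl fun a _ => ?_
          rw [vecMulVec_apply, Pi.star_apply, RCLike.star_def]
          ring
      _ = (∑ a, Uᴴ j a * x a) * (starRingEnd ℂ) (x b) := (Finset.sum_mul _ _ _).symm
      _ = (Uᴴ *ᵥ x) j * (starRingEnd ℂ) (x b) := rfl
  rw [Finset.sum_congr rfl fun b _ => by rw [h1 b]]
  have h2 : (starRingEnd ℂ) ((Uᴴ *ᵥ x) l) = ∑ b, U b l * (starRingEnd ℂ) (x b) := by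
    show (starRingEnd ℂ) (∑ b, Uᴴ l b * x b) = _
    rw [map_sum]
    refine Finset.sum_congr rfl fun b _ => ?_
    rw [_root_.map_mul, conjTranspose_apply, RCLike.star_def, Complex.conj_conj]
  rw [h2, Finset.mul_sum]
  refine Finset.sum_congr rfl fun b _ => ?_
  ring

end QfiAux

open QfiAux in
theorem qfi_convex_roof
    {d : ℕ} (ρ H : Matrix (Fin d) (Fin d) ℂ)
    (hρ : ρ.PosSemidef) (hρtr : ρ.trace = 1) (hH : H.IsHermitian) :
    (∀ (K : ℕ), 0 < K → ∀ (q : Fin K → ℝ) (η : Fin K → Fin d → ℂ),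
      (∀ k, 0 < q k) → ∑ k, q k = 1 → (∀ k, star (η k) ⬝ᵥ η k = 1) →
      ∑ k, ((q k : ℝ) : ℂ) • Matrix.vecMulVec (η k) (star (η k)) = ρ →
      QFI hρ.isHermitian H ≤ 4 * ∑ k, q k * varVec H (η k)) ∧
    (∃ (K : ℕ) (q : Fin K → ℝ) (η : Fin K → Fin d → ℂ),
      0 < K ∧ (∀ k, 0 < q k) ∧ ∑ k, q k = 1 ∧ (∀ k, star (η k) ⬝ᵥ η k = 1) ∧
      ∑ k, ((q k : ℝ) : ℂ) • Matrix.vecMulVec (η k) (star (η k)) = ρ ∧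
      4 * ∑ k, q k * varVec H (η k) = QFI hρ.isHermitian H) := by
  classical
  set p : Fin d → ℝ := hρ.isHermitian.eigenvalues with hpdef
  set U : Matrix (Fin d) (Fin d) ℂ :=
    (Matrix.IsHermitian.eigenvectorUnitary hρ.isHermitian : Matrix (Fin d) (Fin d) ℂ) with hUdef
  have hp0 : ∀ j, 0 ≤ p j := fun j => hρ.eigenvalues_nonneg j
  have hUU' : U * Uᴴ = 1 := by
    rw [← Matrix.star_eq_conjTranspose]
    exact (Matrix.mem_unitaryGroup_iff).mp
      (Matrix.IsHermitian.eigenvectorUnitary hρ.isHermitian).2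
  have hUU : Uᴴ * U = 1 := mul_eq_one_comm.1 hUU'
  have hdiag : Uᴴ * ρ * U = Matrix.diagonal (fun j => (p j : ℂ)) := by
    have h := hρ.isHermitian.conjStarAlgAut_star_eigenvectorUnitary
    rw [Unitary.conjStarAlgAut_apply] at h
    simp only [Unitary.coe_star, Matrix.star_eq_conjTranspose, conjTranspose_conjTranspose] at h
    exact h
  have hρU : ρ = U * Matrix.diagonal (fun j => (p j : ℂ)) * Uᴴ := by
    rw [← hdiag]
    calc ρ = (U * Uᴴ) * ρ * (U * Uᴴ) := by rw [hUU', one_mul, mul_one]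
      _ = U * (Uᴴ * ρ * U) * Uᴴ := by noncomm_ring
  set A : Matrix (Fin d) (Fin d) ℂ := Uᴴ * H * U with hAdef
  have hAh : ∀ j l, (starRingEnd ℂ) (A j l) = A l j := by
    have hherm : Aᴴ = A := by
      rw [hAdef, conjTranspose_mul, conjTranspose_mul, conjTranspose_conjTranspose, hH.eq]
      rw [Matrix.mul_assoc]
    intro j l
    have h := congrFun (congrFun hherm l) j
    rw [conjTranspose_apply, RCLike.star_def] at h
    exact h
  have hUφ : ∀ (a j : Fin d), U a j = (hρ.isHermitian.eigenvectorBasis j) a := by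
    intro a j
    rw [hUdef]
    rfl
  have hentry : ∀ j l, star (fun i => (hρ.isHermitian.eigenvectorBasis j) i)
      ⬝ᵥ (H *ᵥ fun i => (hρ.isHermitian.eigenvectorBasis l) i) = A j l := by
    intro j l
    calc star (fun i => (hρ.isHermitian.eigenvectorBasis j) i)
        ⬝ᵥ (H *ᵥ fun i => (hρ.isHermitian.eigenvectorBasis l) i)
        = ∑ a, ∑ b, (starRingEnd ℂ) (U a j) * (H a b * U b l) := by
          simp only [dotProduct, mulVec, Pi.star_apply, RCLike.star_def, Finset.mul_sum,
            fun a j => (hUφ a j).symm]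
      _ = A j l := by
          rw [hAdef, Matrix.mul_apply, Finset.sum_comm]
          refine Finset.sum_congr rfl fun b _ => ?_
          rw [Matrix.mul_apply, Finset.sum_mul]
          refine Finset.sum_congr rfl fun a _ => ?_
          rw [conjTranspose_apply, RCLike.star_def]
          ring
  have hQFIval : QFI hρ.isHermitian H
      = 2 * ∑ j, ∑ l, (if 0 < p j + p l
          then (p j - p l) ^ 2 / (p j + p l) * normSq (A j l) else 0) := by
    show qfiOf H hρ.isHermitian.eigenvalues
      (fun j i => hρ.isHermitian.eigenvectorBasis j i) = _
    unfold qfiOf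
    congr 1
    refine Finset.sum_congr rfl fun j _ => Finset.sum_congr rfl fun l _ => ?_
    rw [hentry j l]
  constructor
  · -- part (a)
    intro K hK q η hq hqsum hunit hdecomp
    set cc : Fin K → Fin d → ℂ := fun k => Uᴴ *ᵥ η k with hccdef
    have hUAU : U * A * Uᴴ = H := by
      rw [hAdef]
      calc U * (Uᴴ * H * U) * Uᴴ = (U * Uᴴ) * H * (U * Uᴴ) := by noncomm_ring
        _ = H := by rw [hUU', one_mul, mul_one]
    have hUAAU : U * (A * A) * Uᴴ = H * H := by
      rw [hAdef]
      calc U * ((Uᴴ * H * U) * (Uᴴ * H * U)) * Uᴴ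
          = (U * Uᴴ) * H * ((U * Uᴴ) * H * (U * Uᴴ)) := by noncomm_ring
        _ = H * H := by
            rw [hUU']
            simp [Matrix.one_mul, Matrix.mul_one]
    have hvarEq : ∀ k, varVec A (cc k) = varVec H (η k) := by
      intro k
      show (star (Uᴴ *ᵥ η k) ⬝ᵥ ((A * A) *ᵥ (Uᴴ *ᵥ η k))).re
          - ((star (Uᴴ *ᵥ η k) ⬝ᵥ (A *ᵥ (Uᴴ *ᵥ η k))).re) ^ 2 = varVec H (η k)
      rw [dot_conj_transform, dot_conj_transform, hUAU, hUAAU]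
      rfl
    have hunit' : ∀ k, ∑ j, normSq (cc k j) = 1 := by
      intro k
      have h1 : star (cc k) ⬝ᵥ ((1 : Matrix (Fin d) (Fin d) ℂ) *ᵥ cc k) = 1 := by
        show star (Uᴴ *ᵥ η k) ⬝ᵥ ((1 : Matrix (Fin d) (Fin d) ℂ) *ᵥ (Uᴴ *ᵥ η k)) = 1
        rw [dot_conj_transform, Matrix.mul_one, hUU', one_mulVec]
        exact hunit k
      rw [one_mulVec] at h1
      have h2 : star (cc k) ⬝ᵥ cc k = ((∑ j, normSq (cc k j) : ℝ) : ℂ) := by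
        rw [dotProduct, Complex.ofReal_sum]
        refine Finset.sum_congr rfl fun j _ => ?_
        rw [Pi.star_apply, RCLike.star_def, mul_comm, Complex.mul_conj]
      rw [h2] at h1
      exact_mod_cast h1
    have hdec' : ∀ j l, ∑ k, (q k : ℂ) * (cc k j * (starRingEnd ℂ) (cc k l))
        = if j = l then (p j : ℂ) else 0 := by
      intro j l
      have h1 : ∀ k, (q k : ℂ) * (cc k j * (starRingEnd ℂ) (cc k l))
          = (q k : ℂ) * (Uᴴ * vecMulVec (η k) (star (η k)) * U) j l := by
        intro k
        rw [conj_vecMulVec U (η k) j l]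
      rw [Finset.sum_congr rfl fun k _ => h1 k]
      have h3 : ∑ k, (q k : ℂ) * (Uᴴ * vecMulVec (η k) (star (η k)) * U) j l
          = (Uᴴ * ρ * U) j l := by
        rw [← hdecomp, Matrix.mul_sum, Matrix.sum_mul, Matrix.sum_apply]
        refine Finset.sum_congr rfl fun k _ => ?_
        rw [Matrix.mul_smul, Matrix.smul_mul, Matrix.smul_apply, smul_eq_mul]
      rw [h3, hdiag, Matrix.diagonal_apply]
    have hcore := core_ineq p hp0 A hAh q cc hq hunit' hdec'
    rw [hQFIval, qfi_eq p hp0 A hAh]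
    have hsumEq : ∑ k, q k * varVec A (cc k) = ∑ k, q k * varVec H (η k) :=
      Finset.sum_congr rfl fun k _ => by rw [hvarEq k]
    rw [hsumEq] at hcore
    linarith
  · -- part (b)
    have hp1 : ∑ j, p j = 1 := by
      have htr : ρ.trace = ((∑ j, p j : ℝ) : ℂ) := by
        rw [hρU, Matrix.trace_mul_comm, ← Matrix.mul_assoc, hUU, one_mul,
          Matrix.trace_diagonal]
        exact (Complex.ofReal_sum _ _).symm
      rw [htr] at hρtr
      exact_mod_cast hρtr
    obtain ⟨K, q, c, hK, hqpos, hqsum, hcunit, hcdec, hval⟩ := core_exists p hp0 hp1 A hAh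
    have hAA : Uᴴ * (H * H) * U = A * A := by
      rw [hAdef]
      calc Uᴴ * (H * H) * U = Uᴴ * H * (U * Uᴴ) * H * U := by
            rw [hUU']
            noncomm_ring
        _ = (Uᴴ * H * U) * (Uᴴ * H * U) := by noncomm_ring
    refine ⟨K, q, (fun k => U *ᵥ c k), hK, hqpos, hqsum, ?_, ?_, ?_⟩
    · intro k
      have h := dot_conj_transform Uᴴ 1 (c k) (c k)
      rw [conjTranspose_conjTranspose, Matrix.mul_one, hUU, one_mulVec, one_mulVec] at h
      rw [h]
      exact hcunit k
    · have hDD : ∑ k, (q k : ℂ) • vecMulVec (c k) (star (c k))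
          = Matrix.diagonal (fun j => (p j : ℂ)) := by
        ext j l
        rw [Matrix.sum_apply]
        have hterm : ∀ k, ((q k : ℂ) • vecMulVec (c k) (star (c k))) j l
            = (q k : ℂ) * (c k j * (starRingEnd ℂ) (c k l)) := by
          intro k
          rw [Matrix.smul_apply, vecMulVec_apply, Pi.star_apply, RCLike.star_def,
            smul_eq_mul]
        rw [Finset.sum_congr rfl fun k _ => hterm k, hcdec j l, Matrix.diagonal_apply]
      have hWk : ∀ k, vecMulVec (U *ᵥ c k) (star (U *ᵥ c k))
          = U * vecMulVec (c k) (star (c k)) * Uᴴ := by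
        intro k
        ext a b
        have h := conj_vecMulVec Uᴴ (c k) a b
        rw [conjTranspose_conjTranspose] at h
        rw [h, vecMulVec_apply, Pi.star_apply, RCLike.star_def]
      calc ∑ k, (q k : ℂ) • vecMulVec (U *ᵥ c k) (star (U *ᵥ c k))
          = ∑ k, (q k : ℂ) • (U * vecMulVec (c k) (star (c k)) * Uᴴ) := by
            refine Finset.sum_congr rfl fun k _ => ?_
            rw [hWk k]
        _ = U * (∑ k, (q k : ℂ) • vecMulVec (c k) (star (c k))) * Uᴴ := by
            rw [Matrix.mul_sum, Matrix.sum_mul]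
            refine Finset.sum_congr rfl fun k _ => ?_
            rw [Matrix.mul_smul, Matrix.smul_mul]
        _ = U * Matrix.diagonal (fun j => (p j : ℂ)) * Uᴴ := by rw [hDD]
        _ = ρ := hρU.symm
    · have hvarEq : ∀ k, varVec H (U *ᵥ c k) = varVec A (c k) := by
        intro k
        have h1 := dot_conj_transform Uᴴ H (c k) (c k)
        have h2 := dot_conj_transform Uᴴ (H * H) (c k) (c k)
        rw [conjTranspose_conjTranspose] at h1 h2
        show (star (U *ᵥ c k) ⬝ᵥ ((H * H) *ᵥ (U *ᵥ c k))).re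
            - ((star (U *ᵥ c k) ⬝ᵥ (H *ᵥ (U *ᵥ c k))).re) ^ 2 = varVec A (c k)
        rw [h1, h2, hAA]
        rfl
      have hsumEq : ∑ k, q k * varVec H (U *ᵥ c k) = ∑ k, q k * varVec A (c k) :=
        Finset.sum_congr rfl fun k _ => by rw [hvarEq k]
      rw [hQFIval, qfi_eq p hp0 A hAh, hsumEq, hval]
      have hflat : ∑ j, ∑ l, p j * (rr p j l ^ 2 * normSq (A j l))
          = ∑ j, ∑ l, p j * rr p j l ^ 2 * normSq (A j l) :=
        Finset.sum_congr rfl fun j _ => Finset.sum_congr rfl fun l _ => by ring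
      rw [hflat]

end
end
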